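/- arXiv:2403.04110 — 2 statements merged into one kernel-verified Lean document; each statement's English description precedes it below -/
import Mathlib

section
/- Let G be a finite simple maximal outerplanar graph and let xy be an edge of G with d_x ≤ d_y whose common neighborhood is N(x) ∩ N(y) = {w, z} with w ≠ z, such that |N(x) ∩ N(w) \ {y}| = 0, |N(x) ∩ N(z) \ {y}| = 1, |N(y) ∩ N(w) \ {x}| = 1, and |N(y) ∩ N(z) \ {x}| = 1. Then the Lin–Lu–Yau curvature satisfies κ(x,y) = 5/d_x + 6/d_y − 2 if d_y < 2·d_x, and κ(x,y) = 4/d_x + 8/d_y − 2 if d_y ≥ 2·d_x. -/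
open SimpleGraph

/-- `H` is a minor of `G`: there is a family of nonempty, connected, pairwise disjoint
branch sets in `G`, one for each vertex of `H`, with an edge of `G` between the branch
sets corresponding to each edge of `H`. -/
def SimpleGraph.IsMinorOf {W : Type*} {V : Type*} (H : SimpleGraph W) (G : SimpleGraph V) :
    Prop :=
  ∃ B : W → Set V,
    (∀ w, (G.induce (B w)).Connected) ∧
    (Pairwise fun w₁ w₂ => Disjoint (B w₁) (B w₂)) ∧
    ∀ ⦃w₁ w₂⦄, H.Adj w₁ w₂ → ∃ u ∈ B w₁, ∃ v ∈ B w₂, G.Adj u v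

/-- A graph is outerplanar iff it has no `K₄` minor and no `K_{2,3}` minor
(Chartrand–Harary). -/
def Outerplanar {V : Type*} (G : SimpleGraph V) : Prop :=
  ¬ (completeGraph (Fin 4)).IsMinorOf G ∧
  ¬ (completeBipartiteGraph (Fin 2) (Fin 3)).IsMinorOf G

/-- A graph is planar iff it has no `K₅` minor and no `K_{3,3}` minor (Wagner). -/
def Planar {V : Type*} (G : SimpleGraph V) : Prop :=
  ¬ (completeGraph (Fin 5)).IsMinorOf G ∧
  ¬ (completeBipartiteGraph (Fin 3) (Fin 3)).IsMinorOf G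

/-- A maximal outerplanar graph: outerplanar, and adding any edge between two distinct
non-adjacent vertices destroys outerplanarity. -/
def MaximalOuterplanar {V : Type*} (G : SimpleGraph V) : Prop :=
  Outerplanar G ∧ ∀ x y : V, x ≠ y → ¬ G.Adj x y →
    ¬ Outerplanar (G ⊔ fromEdgeSet {s(x, y)})

/-- The (normalized) graph Laplacian `Δf(v) = (1/d_v) ∑_{u ∈ N(v)} (f u - f v)`. -/
noncomputable def graphLap {V : Type*} (G : SimpleGraph V) [Fintype V] [DecidableRel G.Adj]
    (f : V → ℤ) (v : V) : ℝ :=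
  (∑ u ∈ G.neighborFinset v, ((f u : ℝ) - (f v : ℝ))) / (G.degree v)

/-- The Lin–Lu–Yau curvature of the pair `(x, y)`, via the limit-free Laplacian
formulation: the infimum of `Δf(x) - Δf(y)` over integer-valued functions `f` that are
`1`-Lipschitz w.r.t. the graph distance and satisfy `f y - f x = 1`. -/
noncomputable def llyCurv {V : Type*} (G : SimpleGraph V) [Fintype V] [DecidableRel G.Adj]
    (x y : V) : ℝ :=
  sInf { r : ℝ | ∃ f : V → ℤ,
    (∀ u v : V, |f u - f v| ≤ (G.dist u v : ℤ)) ∧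
    f y - f x = 1 ∧
    r = graphLap G f x - graphLap G f y }

section Helpers
variable {V : Type*} {G : SimpleGraph V}

lemma induce_adj_of {s : Set V} {a b : V} (ha : a ∈ s) (hb : b ∈ s) (h : G.Adj a b) :
    (G.induce s).Adj ⟨a, ha⟩ ⟨b, hb⟩ := h

lemma induce_reachable {s : Set V} {a b : ↥s} (h : (G.induce s).Reachable a b) :
    G.Reachable ↑a ↑b :=
  h.map (⟨Subtype.val, fun h => h⟩ : G.induce s →g G)

lemma connected_induce_single (a : V) : (G.induce ({a} : Set V)).Connected := by
  rw [connected_iff]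
  refine ⟨fun u v => ?_, ⟨⟨a, rfl⟩⟩⟩
  have hu : u = v := Subtype.ext (by rw [u.2.out, v.2.out])
  exact hu ▸ Reachable.refl _

lemma connected_induce_pair {a b : V} (h : G.Adj a b) :
    (G.induce ({a, b} : Set V)).Connected := by
  rw [connected_iff]
  have ha : a ∈ ({a, b} : Set V) := Set.mem_insert _ _
  have hb : b ∈ ({a, b} : Set V) := Set.mem_insert_of_mem _ rfl
  refine ⟨fun u v => ?_, ⟨⟨a, ha⟩⟩⟩
  have key : ∀ u : ↥({a, b} : Set V), (G.induce ({a, b} : Set V)).Reachable u ⟨a, ha⟩ := by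
    rintro ⟨u, hu⟩
    rcases hu with hu | hu
    · subst hu; exact Reachable.refl _
    · rw [Set.mem_singleton_iff] at hu; subst hu
      exact (induce_adj_of hb ha h.symm).reachable
  exact (key u).trans (key v).symm

lemma connected_induce_triple {a b c : V} (hab : G.Adj a b) (hbc : G.Adj b c) :
    (G.induce ({a, b, c} : Set V)).Connected := by
  rw [connected_iff]
  have ha : a ∈ ({a, b, c} : Set V) := by simp
  have hb : b ∈ ({a, b, c} : Set V) := by simp
  have hc : c ∈ ({a, b, c} : Set V) := by simp
  refine ⟨fun u v => ?_, ⟨⟨a, ha⟩⟩⟩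
  have key : ∀ u : ↥({a, b, c} : Set V), (G.induce ({a, b, c} : Set V)).Reachable u ⟨b, hb⟩ := by
    rintro ⟨u, hu⟩
    rcases hu with hu | hu | hu
    · subst hu; exact (induce_adj_of ha hb hab).reachable
    · subst hu; exact Reachable.refl _
    · rw [Set.mem_singleton_iff] at hu; subst hu
      exact (induce_adj_of hc hb hbc.symm).reachable
  exact (key u).trans (key v).symm

lemma k4_minor_of (p q r : V) (S : Set V)
    (hS : (G.induce S).Connected)
    (hpS : p ∉ S) (hqS : q ∉ S) (hrS : r ∉ S)
    (hpq : G.Adj p q) (hpr : G.Adj p r) (hqr : G.Adj q r)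
    (epS : ∃ s ∈ S, G.Adj p s) (eqS : ∃ s ∈ S, G.Adj q s) (erS : ∃ s ∈ S, G.Adj r s) :
    (completeGraph (Fin 4)).IsMinorOf G := by
  obtain ⟨sp, hsp, hasp⟩ := epS
  obtain ⟨sq, hsq, hasq⟩ := eqS
  obtain ⟨sr, hsr, hasr⟩ := erS
  refine ⟨![{p}, {q}, {r}, S], ?_, ?_, ?_⟩
  · intro i
    fin_cases i <;>
      simp only [Matrix.cons_val_zero, Matrix.cons_val_one, Matrix.head_cons, Matrix.cons_val_two,
        Matrix.tail_cons, Matrix.cons_val_three] <;>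
      first
        | exact connected_induce_single _
        | exact hS
  · have hqp := hpq.ne
    have hrp := hpr.ne
    have hrq := hqr.ne
    intro i j hij
    fin_cases i <;> fin_cases j <;>
      simp_all [Set.disjoint_singleton_left, Set.disjoint_singleton_right,
        Set.disjoint_singleton] <;>
      first
        | exact hqp.symm
        | exact hrp.symm
        | exact hrq.symm
        | tauto
  · intro i j hij
    have hne : i ≠ j := by simpa [completeGraph] using hij
    fin_cases i <;> fin_cases j <;> simp_all <;>
      first
        | exact ⟨q, hpq⟩
        | exact ⟨p, hpq.symm⟩
        | exact ⟨r, hpr⟩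
        | exact ⟨p, hpr.symm⟩
        | exact ⟨r, hqr⟩
        | exact ⟨q, hqr.symm⟩
        | exact ⟨sp, hsp, hasp.symm⟩
        | exact ⟨sq, hsq, hasq.symm⟩
        | exact ⟨sr, hsr, hasr.symm⟩
        | exact ⟨sp, hasp, hsp⟩
        | exact ⟨sq, hasq, hsq⟩
        | exact ⟨sr, hasr, hsr⟩
        | exact ⟨sp, hsp, hasp⟩
        | exact ⟨sq, hsq, hasq⟩
        | exact ⟨sr, hsr, hasr⟩
        | exact hpq
        | exact hpq.symm
        | exact hpr
        | exact hpr.symm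
        | exact hqr
        | exact hqr.symm

end Helpers

section Helpers2
variable {V : Type*} {G : SimpleGraph V}

lemma k23_minor_of (p q : V) (A B C : Set V)
    (hA : (G.induce A).Connected) (hB : (G.induce B).Connected) (hC : (G.induce C).Connected)
    (hpq : p ≠ q)
    (hpA : p ∉ A) (hpB : p ∉ B) (hpC : p ∉ C)
    (hqA : q ∉ A) (hqB : q ∉ B) (hqC : q ∉ C)
    (hAB : Disjoint A B) (hAC : Disjoint A C) (hBC : Disjoint B C)
    (epA : ∃ s ∈ A, G.Adj p s) (epB : ∃ s ∈ B, G.Adj p s) (epC : ∃ s ∈ C, G.Adj p s)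
    (eqA : ∃ s ∈ A, G.Adj q s) (eqB : ∃ s ∈ B, G.Adj q s) (eqC : ∃ s ∈ C, G.Adj q s) :
    (completeBipartiteGraph (Fin 2) (Fin 3)).IsMinorOf G := by
  refine ⟨Sum.elim ![{p}, {q}] ![A, B, C], ?_, ?_, ?_⟩
  · rintro (i | i) <;> fin_cases i <;>
      simp only [Sum.elim_inl, Sum.elim_inr, Matrix.cons_val_zero, Matrix.cons_val_one,
        Matrix.head_cons, Matrix.cons_val_two, Matrix.tail_cons] <;>
      first
        | exact connected_induce_single _
        | exact hA
        | exact hB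
        | exact hC
  · rintro (i | i) (j | j) hij <;> fin_cases i <;> fin_cases j <;>
      simp_all [Set.disjoint_singleton_left, Set.disjoint_singleton_right] <;>
      first
        | exact hpq.symm
        | exact hAB.symm
        | exact hAC.symm
        | exact hBC.symm
        | tauto
  · have solve : ∀ (i : Fin 2) (j : Fin 3), True := fun _ _ => trivial
    rintro (i | i) (j | j) hij
    · exact absurd hij (by simp [completeBipartiteGraph])
    · fin_cases i <;> fin_cases j <;>
        simp only [Sum.elim_inl, Sum.elim_inr, Matrix.cons_val_zero, Matrix.cons_val_one,
          Matrix.head_cons, Matrix.cons_val_two, Matrix.tail_cons,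
          Set.mem_singleton_iff, exists_eq_left] <;>
        first
          | (obtain ⟨s, hs, ha⟩ := epA; exact ⟨p, rfl, s, hs, ha⟩)
          | (obtain ⟨s, hs, ha⟩ := epB; exact ⟨p, rfl, s, hs, ha⟩)
          | (obtain ⟨s, hs, ha⟩ := epC; exact ⟨p, rfl, s, hs, ha⟩)
          | (obtain ⟨s, hs, ha⟩ := eqA; exact ⟨q, rfl, s, hs, ha⟩)
          | (obtain ⟨s, hs, ha⟩ := eqB; exact ⟨q, rfl, s, hs, ha⟩)
          | (obtain ⟨s, hs, ha⟩ := eqC; exact ⟨q, rfl, s, hs, ha⟩)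
          | (obtain ⟨s, hs, ha⟩ := epA; exact ⟨s, hs, ha⟩)
          | (obtain ⟨s, hs, ha⟩ := epB; exact ⟨s, hs, ha⟩)
          | (obtain ⟨s, hs, ha⟩ := epC; exact ⟨s, hs, ha⟩)
          | (obtain ⟨s, hs, ha⟩ := eqA; exact ⟨s, hs, ha⟩)
          | (obtain ⟨s, hs, ha⟩ := eqB; exact ⟨s, hs, ha⟩)
          | (obtain ⟨s, hs, ha⟩ := eqC; exact ⟨s, hs, ha⟩)
          | (obtain ⟨s, hs, ha⟩ := epA; exact ⟨s, hs, p, rfl, ha.symm⟩)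
          | (obtain ⟨s, hs, ha⟩ := epB; exact ⟨s, hs, p, rfl, ha.symm⟩)
          | (obtain ⟨s, hs, ha⟩ := epC; exact ⟨s, hs, p, rfl, ha.symm⟩)
          | (obtain ⟨s, hs, ha⟩ := eqA; exact ⟨s, hs, q, rfl, ha.symm⟩)
          | (obtain ⟨s, hs, ha⟩ := eqB; exact ⟨s, hs, q, rfl, ha.symm⟩)
          | (obtain ⟨s, hs, ha⟩ := eqC; exact ⟨s, hs, q, rfl, ha.symm⟩)
          | (obtain ⟨s, hs, ha⟩ := epA; exact ⟨s, hs, ha.symm⟩)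
          | (obtain ⟨s, hs, ha⟩ := epB; exact ⟨s, hs, ha.symm⟩)
          | (obtain ⟨s, hs, ha⟩ := epC; exact ⟨s, hs, ha.symm⟩)
          | (obtain ⟨s, hs, ha⟩ := eqA; exact ⟨s, hs, ha.symm⟩)
          | (obtain ⟨s, hs, ha⟩ := eqB; exact ⟨s, hs, ha.symm⟩)
          | (obtain ⟨s, hs, ha⟩ := eqC; exact ⟨s, hs, ha.symm⟩)
    · fin_cases i <;> fin_cases j <;>
        simp only [Sum.elim_inl, Sum.elim_inr, Matrix.cons_val_zero, Matrix.cons_val_one,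
          Matrix.head_cons, Matrix.cons_val_two, Matrix.tail_cons,
          Set.mem_singleton_iff, exists_eq_left] <;>
        first
          | (obtain ⟨s, hs, ha⟩ := epA; exact ⟨p, rfl, s, hs, ha⟩)
          | (obtain ⟨s, hs, ha⟩ := epB; exact ⟨p, rfl, s, hs, ha⟩)
          | (obtain ⟨s, hs, ha⟩ := epC; exact ⟨p, rfl, s, hs, ha⟩)
          | (obtain ⟨s, hs, ha⟩ := eqA; exact ⟨q, rfl, s, hs, ha⟩)
          | (obtain ⟨s, hs, ha⟩ := eqB; exact ⟨q, rfl, s, hs, ha⟩)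
          | (obtain ⟨s, hs, ha⟩ := eqC; exact ⟨q, rfl, s, hs, ha⟩)
          | (obtain ⟨s, hs, ha⟩ := epA; exact ⟨s, hs, ha⟩)
          | (obtain ⟨s, hs, ha⟩ := epB; exact ⟨s, hs, ha⟩)
          | (obtain ⟨s, hs, ha⟩ := epC; exact ⟨s, hs, ha⟩)
          | (obtain ⟨s, hs, ha⟩ := eqA; exact ⟨s, hs, ha⟩)
          | (obtain ⟨s, hs, ha⟩ := eqB; exact ⟨s, hs, ha⟩)
          | (obtain ⟨s, hs, ha⟩ := eqC; exact ⟨s, hs, ha⟩)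
          | (obtain ⟨s, hs, ha⟩ := epA; exact ⟨s, hs, p, rfl, ha.symm⟩)
          | (obtain ⟨s, hs, ha⟩ := epB; exact ⟨s, hs, p, rfl, ha.symm⟩)
          | (obtain ⟨s, hs, ha⟩ := epC; exact ⟨s, hs, p, rfl, ha.symm⟩)
          | (obtain ⟨s, hs, ha⟩ := eqA; exact ⟨s, hs, q, rfl, ha.symm⟩)
          | (obtain ⟨s, hs, ha⟩ := eqB; exact ⟨s, hs, q, rfl, ha.symm⟩)
          | (obtain ⟨s, hs, ha⟩ := eqC; exact ⟨s, hs, q, rfl, ha.symm⟩)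
          | (obtain ⟨s, hs, ha⟩ := epA; exact ⟨s, hs, ha.symm⟩)
          | (obtain ⟨s, hs, ha⟩ := epB; exact ⟨s, hs, ha.symm⟩)
          | (obtain ⟨s, hs, ha⟩ := epC; exact ⟨s, hs, ha.symm⟩)
          | (obtain ⟨s, hs, ha⟩ := eqA; exact ⟨s, hs, ha.symm⟩)
          | (obtain ⟨s, hs, ha⟩ := eqB; exact ⟨s, hs, ha.symm⟩)
          | (obtain ⟨s, hs, ha⟩ := eqC; exact ⟨s, hs, ha.symm⟩)
    · exact absurd hij (by simp [completeBipartiteGraph])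

end Helpers2

section Bridge
variable {V : Type*} {G : SimpleGraph V} {p q : V}

lemma induce_adj_of' {s : Set V} {a b : V} (ha : a ∈ s) (hb : b ∈ s) (h : G.Adj a b) :
    (G.induce s).Adj ⟨a, ha⟩ ⟨b, hb⟩ := h

lemma induce_reachable' {s : Set V} {a b : ↥s} (h : (G.induce s).Reachable a b) :
    G.Reachable ↑a ↑b :=
  h.map (⟨Subtype.val, fun h => h⟩ : G.induce s →g G)

lemma sup_edge_adj (hpq : p ≠ q) (u v : V) :
    (G ⊔ fromEdgeSet {s(p, q)}).Adj u v ↔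
      G.Adj u v ∨ (u = p ∧ v = q) ∨ (u = q ∧ v = p) := by
  rw [sup_adj, fromEdgeSet_adj]
  constructor
  · rintro (h | ⟨h, -⟩)
    · exact Or.inl h
    · rw [Set.mem_singleton_iff, Sym2.eq_iff] at h
      exact Or.inr h
  · rintro (h | ⟨rfl, rfl⟩ | ⟨rfl, rfl⟩)
    · exact Or.inl h
    · exact Or.inr ⟨by simp, hpq⟩
    · exact Or.inr ⟨by simp [Sym2.eq_swap], hpq.symm⟩

/-- Trichotomy for walks in `(G + pq).induce B`. -/
lemma bridge_core (hpq : ¬ G.Reachable p q) {B : Set V} :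
    ∀ {u v : ↥B}, ((G ⊔ fromEdgeSet {s(p, q)}).induce B).Walk u v →
      (G.induce B).Reachable u v ∨
      (∃ (hp : p ∈ B) (hq : q ∈ B),
        (G.induce B).Reachable u ⟨p, hp⟩ ∧ (G.induce B).Reachable ⟨q, hq⟩ v) ∨
      (∃ (hp : p ∈ B) (hq : q ∈ B),
        (G.induce B).Reachable u ⟨q, hq⟩ ∧ (G.induce B).Reachable ⟨p, hp⟩ v) := by
  have hne : p ≠ q := fun h => hpq (h ▸ Reachable.refl p)
  intro u v wk
  induction wk with
  | nil => exact Or.inl (Reachable.refl _)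
  | @cons a b c h wk ih =>
    have hadj : G.Adj ↑a ↑b ∨ (↑a = p ∧ ↑b = q) ∨ (↑a = q ∧ ↑b = p) :=
      (sup_edge_adj hne _ _).mp h
    rcases hadj with hadj | ⟨hap, hbq⟩ | ⟨haq, hbp⟩
    · have step : (G.induce B).Adj a b := hadj
      rcases ih with h1 | ⟨hp', hq', h1, h2⟩ | ⟨hp', hq', h1, h2⟩
      · exact Or.inl (step.reachable.trans h1)
      · exact Or.inr (Or.inl ⟨hp', hq', step.reachable.trans h1, h2⟩)
      · exact Or.inr (Or.inr ⟨hp', hq', step.reachable.trans h1, h2⟩)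
    · have hpB : p ∈ B := hap ▸ a.2
      have hqB : q ∈ B := hbq ▸ b.2
      have haP : a = (⟨p, hpB⟩ : ↥B) := Subtype.ext hap
      have hbQ : b = (⟨q, hqB⟩ : ↥B) := Subtype.ext hbq
      rcases ih with h1 | ⟨hp', hq', h1, h2⟩ | ⟨hp', hq', h1, h2⟩
      · exact Or.inr (Or.inl ⟨hpB, hqB, haP ▸ Reachable.refl _, hbQ ▸ h1⟩)
      · exact absurd (induce_reachable' (hbQ ▸ h1 : (G.induce B).Reachable ⟨q, hqB⟩ ⟨p, hp'⟩))
          (fun hr => hpq hr.symm)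
      · exact Or.inl (haP ▸ h2)
    · have hqB : q ∈ B := haq ▸ a.2
      have hpB : p ∈ B := hbp ▸ b.2
      have haQ : a = (⟨q, hqB⟩ : ↥B) := Subtype.ext haq
      have hbP : b = (⟨p, hpB⟩ : ↥B) := Subtype.ext hbp
      rcases ih with h1 | ⟨hp', hq', h1, h2⟩ | ⟨hp', hq', h1, h2⟩
      · exact Or.inr (Or.inr ⟨hpB, hqB, haQ ▸ Reachable.refl _, hbP ▸ h1⟩)
      · exact Or.inl (haQ ▸ h2)
      · exact absurd (induce_reachable' (hbP ▸ h1 : (G.induce B).Reachable ⟨p, hpB⟩ ⟨q, hq'⟩))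
          hpq

lemma bridge_C1 (hpq : ¬ G.Reachable p q) {B : Set V}
    (h : ((G ⊔ fromEdgeSet {s(p, q)}).induce B).Connected) (hmiss : p ∉ B ∨ q ∉ B) :
    (G.induce B).Connected := by
  rw [connected_iff] at h ⊢
  refine ⟨fun u v => ?_, h.2⟩
  obtain ⟨wk⟩ := h.1 u v
  rcases bridge_core hpq wk with h1 | ⟨hp', hq', -⟩ | ⟨hp', hq', -⟩
  · exact h1
  · rcases hmiss with hm | hm <;> [exact absurd hp' hm; exact absurd hq' hm]
  · rcases hmiss with hm | hm <;> [exact absurd hp' hm; exact absurd hq' hm]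

lemma reach_restrict {B : Set V} :
    ∀ {a b : ↥B} (_wk : (G.induce B).Walk a b) (haC : G.Reachable p ↑a) (hbC : G.Reachable p ↑b),
      (G.induce (B ∩ {t | G.Reachable p t})).Reachable ⟨↑a, a.2, haC⟩ ⟨↑b, b.2, hbC⟩ := by
  intro a b wk
  induction wk with
  | nil => intro h1 h2; exact Reachable.refl _
  | @cons a b c hab wk ih =>
    intro h1 h2
    have hadj : G.Adj ↑a ↑b := hab
    have hb' : G.Reachable p ↑b := h1.trans hadj.reachable
    have step : (G.induce (B ∩ {t | G.Reachable p t})).Adj ⟨↑a, a.2, h1⟩ ⟨↑b, b.2, hb'⟩ := hadj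
    exact step.reachable.trans (ih hb' h2)

lemma bridge_C2a (hpq : ¬ G.Reachable p q) {B : Set V}
    (h : ((G ⊔ fromEdgeSet {s(p, q)}).induce B).Connected) (hp : p ∈ B) (hq : q ∈ B) :
    (G.induce (B ∩ {t | G.Reachable p t})).Connected := by
  rw [connected_iff]
  constructor
  · rintro ⟨u, huB, huC⟩ ⟨v, hvB, hvC⟩
    obtain ⟨wk⟩ := h.preconnected ⟨u, huB⟩ ⟨v, hvB⟩
    rcases bridge_core hpq wk with h1 | ⟨hp', hq', h1, h2⟩ | ⟨hp', hq', h1, h2⟩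
    · obtain ⟨wk2⟩ := h1
      exact reach_restrict wk2 huC hvC
    · exact absurd (hvC.trans (induce_reachable' h2).symm).symm (fun hr => hpq hr.symm)
    · exact absurd (huC.trans (induce_reachable' h1)) hpq
  · exact ⟨⟨p, hp, Reachable.refl p⟩⟩

lemma bridge_C2b (hpq : ¬ G.Reachable p q) {B : Set V}
    (h : ((G ⊔ fromEdgeSet {s(p, q)}).induce B).Connected) (hp : p ∈ B) (hq : q ∈ B) :
    ∀ b ∈ B, G.Reachable p b ∨ G.Reachable q b := by
  intro b hb
  obtain ⟨wk⟩ := h.preconnected ⟨b, hb⟩ ⟨p, hp⟩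
  rcases bridge_core hpq wk with h1 | ⟨hp', hq', h1, h2⟩ | ⟨hp', hq', h1, h2⟩
  · exact Or.inl (induce_reachable' h1).symm
  · exact Or.inl (induce_reachable' h1).symm
  · exact Or.inr (induce_reachable' h1).symm

end Bridge

section BridgeMain
variable {V : Type*} {G : SimpleGraph V} {p q : V} {W : Type*} {H : SimpleGraph W}

lemma bridge_build (hpq : ¬ G.Reachable p q)
    (B : W → Set V) (i0 : W)
    (hp0 : p ∈ B i0) (hq0 : q ∈ B i0)
    (hconn0 : ((G ⊔ fromEdgeSet {s(p, q)}).induce (B i0)).Connected)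
    (hconnk : ∀ k, k ≠ i0 → (G.induce (B k)).Connected)
    (hdisj : Pairwise fun a b => Disjoint (B a) (B b))
    (hrealk : ∀ ⦃k l⦄, H.Adj k l → k ≠ i0 → l ≠ i0 → ∃ u ∈ B k, ∃ v ∈ B l, G.Adj u v)
    (hup : ∀ k, k ≠ i0 → ∀ u ∈ B k, G.Reachable p u)
    (hreal0 : ∀ ⦃k⦄, H.Adj k i0 → ∃ u ∈ B k, ∃ v ∈ B i0, G.Adj u v) :
    H.IsMinorOf G := by
  classical
  refine ⟨fun k => if k = i0 then B i0 ∩ {t | G.Reachable p t} else B k, ?_, ?_, ?_⟩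
  · intro k
    by_cases hk : k = i0
    · subst hk; dsimp only; rw [if_pos rfl]; exact bridge_C2a hpq hconn0 hp0 hq0
    · dsimp only; rw [if_neg hk]; exact hconnk k hk
  · intro a b hab
    refine (hdisj hab).mono ?_ ?_ <;> by_cases h : a = i0 <;> by_cases h' : b = i0 <;>
      simp_all [Set.inter_subset_left]
  · intro k l hadj
    by_cases hk : k = i0
    · subst hk
      have hl : l ≠ k := (hadj.ne).symm
      obtain ⟨u, hu, v, hv, ha⟩ := hreal0 hadj.symm
      refine ⟨v, ?_, u, ?_, ha.symm⟩
      · dsimp only; rw [if_pos rfl]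
        exact ⟨hv, ((hup l hl u hu).trans ha.reachable : G.Reachable p v)⟩
      · dsimp only; rw [if_neg hl]; exact hu
    · by_cases hl : l = i0
      · subst hl
        obtain ⟨u, hu, v, hv, ha⟩ := hreal0 hadj
        refine ⟨u, ?_, v, ?_, ha⟩
        · dsimp only; rw [if_neg hk]; exact hu
        · dsimp only; rw [if_pos rfl]
          exact ⟨hv, ((hup k hk u hu).trans ha.reachable : G.Reachable p v)⟩
      · obtain ⟨u, hu, v, hv, ha⟩ := hrealk hadj hk hl
        exact ⟨u, by dsimp only; rw [if_neg hk]; exact hu, v, by dsimp only; rw [if_neg hl]; exact hv, ha⟩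

lemma bridge_minor
    (hyp1 : ∀ ⦃i j : W⦄, H.Adj i j → ∃ wk : H.Walk i j, s(i, j) ∉ wk.edges)
    (hyp2 : ∀ (i0 j k : W), j ≠ i0 → k ≠ i0 → ∃ wk : H.Walk j k, i0 ∉ wk.support)
    (hyp3 : ∀ i : W, ∃ j, H.Adj j i)
    (hpq : ¬ G.Reachable p q)
    (hm : H.IsMinorOf (G ⊔ fromEdgeSet {s(p, q)})) : H.IsMinorOf G := by
  obtain ⟨B, hBconn, hBdisj, hBedge⟩ := hm
  have hne : p ≠ q := fun h => hpq (h ▸ Reachable.refl p)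
  have hqp : ¬ G.Reachable q p := fun h => hpq h.symm
  have huniq : ∀ (t : V) (k l : W), t ∈ B k → t ∈ B l → k = l := by
    intro t k l hk hl
    by_contra hne'
    exact Set.disjoint_left.mp (hBdisj hne') hk hl
  have hwithin : ∀ k, (p ∉ B k ∨ q ∉ B k) → ∀ u ∈ B k, ∀ v ∈ B k, G.Reachable u v := by
    intro k hmiss u hu v hv
    exact induce_reachable' ((bridge_C1 hpq (hBconn k) hmiss).preconnected ⟨u, hu⟩ ⟨v, hv⟩)
  by_cases hsplit : ∃ i0, p ∈ B i0 ∧ q ∈ B i0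
  · obtain ⟨i0, hp0, hq0⟩ := hsplit
    have hmiss : ∀ k, k ≠ i0 → p ∉ B k ∧ q ∉ B k := by
      intro k hk
      exact ⟨fun hmem => hk (huniq p k i0 hmem hp0), fun hmem => hk (huniq q k i0 hmem hq0)⟩
    have hconnk : ∀ k, k ≠ i0 → (G.induce (B k)).Connected := fun k hk =>
      bridge_C1 hpq (hBconn k) (Or.inl (hmiss k hk).1)
    have hrealk : ∀ ⦃k l⦄, H.Adj k l → k ≠ i0 → l ≠ i0 → ∃ u ∈ B k, ∃ v ∈ B l, G.Adj u v := by
      intro k l hadj hk hl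
      obtain ⟨u, hu, v, hv, ha⟩ := hBedge hadj
      rcases (sup_edge_adj hne u v).mp ha with ha' | ⟨he1, he2⟩ | ⟨he1, he2⟩
      · exact ⟨u, hu, v, hv, ha'⟩
      · exact absurd (huniq u k i0 hu (by rw [he1]; exact hp0)) hk
      · exact absurd (huniq u k i0 hu (by rw [he1]; exact hq0)) hk
    have hreal0 : ∀ ⦃k⦄, H.Adj k i0 → ∃ u ∈ B k, ∃ v ∈ B i0, G.Adj u v := by
      intro k hadj
      have hk : k ≠ i0 := hadj.ne
      obtain ⟨u, hu, v, hv, ha⟩ := hBedge hadj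
      rcases (sup_edge_adj hne u v).mp ha with ha' | ⟨he1, he2⟩ | ⟨he1, he2⟩
      · exact ⟨u, hu, v, hv, ha'⟩
      · exact absurd (huniq u k i0 hu (by rw [he1]; exact hp0)) hk
      · exact absurd (huniq u k i0 hu (by rw [he1]; exact hq0)) hk
    have hchain : ∀ (k l : W) (wk : H.Walk k l), i0 ∉ wk.support →
        ∀ u ∈ B k, ∀ v ∈ B l, G.Reachable u v := by
      intro k l wk
      induction wk with
      | nil =>
        intro hsup u hu v hv
        refine hwithin _ (Or.inl (hmiss _ ?_).1) u hu v hv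
        intro h; exact hsup (by simp [h])
      | @cons a b c hab wk ih =>
        intro hsup u hu v hv
        have ha' : a ≠ i0 := fun h => hsup (by simp [h])
        have hb' : b ≠ i0 := fun h => hsup (by
          rw [Walk.support_cons]
          exact List.mem_cons_of_mem _ (h ▸ wk.start_mem_support))
        have hsup' : i0 ∉ wk.support := fun h => hsup (by
          rw [Walk.support_cons]; exact List.mem_cons_of_mem _ h)
        obtain ⟨u1, hu1, v1, hv1, hadj1⟩ := hrealk hab ha' hb'
        have r1 : G.Reachable u u1 := hwithin a (Or.inl (hmiss a ha').1) u hu u1 hu1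
        have r2 : G.Reachable v1 v := ih hsup' v1 hv1 v hv
        exact (r1.trans hadj1.reachable).trans r2
    obtain ⟨ks, hks⟩ := hyp3 i0
    have hksne : ks ≠ i0 := hks.ne
    obtain ⟨us, hus, vs, hvs, hadjs⟩ := hreal0 hks
    rcases bridge_C2b hpq (hBconn i0) hp0 hq0 vs hvs with hside | hside
    · have hup : ∀ k, k ≠ i0 → ∀ u ∈ B k, G.Reachable p u := by
        intro k hk u hu
        obtain ⟨wk, hwk⟩ := hyp2 i0 ks k hksne hk
        exact ((hside.trans hadjs.reachable.symm)).trans (hchain ks k wk hwk us hus u hu)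
      exact bridge_build hpq B i0 hp0 hq0 (hBconn i0) hconnk hBdisj hrealk hup hreal0
    · have hswap : (fromEdgeSet {s(q, p)} : SimpleGraph V) = fromEdgeSet {s(p, q)} := by
        rw [Sym2.eq_swap]
      have hconn0' : ((G ⊔ fromEdgeSet {s(q, p)}).induce (B i0)).Connected := by
        rw [hswap]; exact hBconn i0
      have hup : ∀ k, k ≠ i0 → ∀ u ∈ B k, G.Reachable q u := by
        intro k hk u hu
        obtain ⟨wk, hwk⟩ := hyp2 i0 ks k hksne hk
        exact ((hside.trans hadjs.reachable.symm)).trans (hchain ks k wk hwk us hus u hu)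
      exact bridge_build hqp B i0 hq0 hp0 hconn0' hconnk hBdisj hrealk hup hreal0
  · push_neg at hsplit
    have hmiss : ∀ k, p ∉ B k ∨ q ∉ B k := by
      intro k
      by_cases h : p ∈ B k
      · exact Or.inr (hsplit k h)
      · exact Or.inl h
    by_cases hAllG : ∀ ⦃k l⦄, H.Adj k l → ∃ u ∈ B k, ∃ v ∈ B l, G.Adj u v
    · exact ⟨B, fun k => bridge_C1 hpq (hBconn k) (hmiss k), hBdisj, hAllG⟩
    · push_neg at hAllG
      obtain ⟨i, j, hij, hno⟩ := hAllG
      obtain ⟨u0, hu0, v0, hv0, ha0⟩ := hBedge hij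
      have hchain2 : ∀ (a b : W), p ∈ B a → q ∈ B b →
          ∀ (k l : W) (wk : H.Walk k l), s(a, b) ∉ wk.edges →
          ∀ u ∈ B k, ∀ v ∈ B l, G.Reachable u v := by
        intro a b hpa hqb k l wk
        induction wk with
        | nil =>
          intro _ u hu v hv
          exact hwithin _ (hmiss _) u hu v hv
        | @cons a' b' c' hab wk ih =>
          intro hedges u hu v hv
          have hene : s(a', b') ≠ s(a, b) := by
            intro h
            refine hedges ?_
            rw [Walk.edges_cons]
            exact h ▸ List.mem_cons_self
          have hedges' : s(a, b) ∉ wk.edges := fun h => hedges (by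
            rw [Walk.edges_cons]; exact List.mem_cons_of_mem _ h)
          obtain ⟨u1, hu1, v1, hv1, hadj1⟩ := hBedge hab
          have hG : G.Adj u1 v1 := by
            rcases (sup_edge_adj hne u1 v1).mp hadj1 with h' | ⟨he1, he2⟩ | ⟨he1, he2⟩
            · exact h'
            · have e1 : a' = a := huniq u1 a' a hu1 (by rw [he1]; exact hpa)
              have e2 : b' = b := huniq v1 b' b hv1 (by rw [he2]; exact hqb)
              exact absurd (by rw [e1, e2] : s(a', b') = s(a, b)) hene
            · have e1 : a' = b := huniq u1 a' b hu1 (by rw [he1]; exact hqb)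
              have e2 : b' = a := huniq v1 b' a hv1 (by rw [he2]; exact hpa)
              exact absurd (by rw [e1, e2, Sym2.eq_swap] : s(a', b') = s(a, b)) hene
          have r1 : G.Reachable u u1 := hwithin a' (hmiss a') u hu u1 hu1
          have r2 : G.Reachable v1 v := ih hedges' v1 hv1 v hv
          exact (r1.trans hG.reachable).trans r2
      rcases (sup_edge_adj hne u0 v0).mp ha0 with hg | ⟨he1, he2⟩ | ⟨he1, he2⟩
      · exact absurd hg (hno u0 hu0 v0 hv0)
      · obtain ⟨wk, hwk⟩ := hyp1 hij
        subst he1; subst he2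
        exact absurd (hchain2 i j hu0 hv0 i j wk hwk u0 hu0 v0 hv0) hpq
      · obtain ⟨wk, hwk⟩ := hyp1 hij.symm
        subst he1; subst he2
        exact absurd (hchain2 j i hv0 hu0 j i wk hwk v0 hv0 u0 hu0) hpq

end BridgeMain

section HypVerify

lemma k4_hyp1 : ∀ ⦃i j : Fin 4⦄, (completeGraph (Fin 4)).Adj i j →
    ∃ wk : (completeGraph (Fin 4)).Walk i j, s(i, j) ∉ wk.edges := by
  have H : ∀ i j : Fin 4, ∃ k : Fin 4, k ≠ i ∧ k ≠ j := by decide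
  intro i j hij
  have hne : i ≠ j := hij
  obtain ⟨k, hki, hkj⟩ := H i j
  refine ⟨Walk.cons (by exact hki.symm : (completeGraph (Fin 4)).Adj i k)
    (Walk.cons (by exact hkj : (completeGraph (Fin 4)).Adj k j) Walk.nil), ?_⟩
  intro hmem
  simp only [Walk.edges_cons, Walk.edges_nil, List.mem_cons, List.not_mem_nil, or_false,
    Sym2.eq_iff] at hmem
  tauto

lemma k4_hyp2 : ∀ (i0 j k : Fin 4), j ≠ i0 → k ≠ i0 →
    ∃ wk : (completeGraph (Fin 4)).Walk j k, i0 ∉ wk.support := by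
  intro i0 j k hj hk
  by_cases hjk : j = k
  · subst hjk
    exact ⟨Walk.nil, by simp [hj.symm]⟩
  · refine ⟨Walk.cons (by exact hjk : (completeGraph (Fin 4)).Adj j k) Walk.nil, ?_⟩
    intro hmem
    simp only [Walk.support_cons, Walk.support_nil, List.mem_cons, List.not_mem_nil,
      or_false] at hmem
    tauto

lemma k4_hyp3 : ∀ i : Fin 4, ∃ j, (completeGraph (Fin 4)).Adj j i := by
  have H : ∀ i : Fin 4, ∃ j : Fin 4, j ≠ i := by decide
  intro i
  obtain ⟨j, hj⟩ := H i
  exact ⟨j, hj⟩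

lemma k23_hyp1 : ∀ ⦃i j : Fin 2 ⊕ Fin 3⦄,
    (completeBipartiteGraph (Fin 2) (Fin 3)).Adj i j →
    ∃ wk : (completeBipartiteGraph (Fin 2) (Fin 3)).Walk i j, s(i, j) ∉ wk.edges := by
  have adjLR : ∀ (a : Fin 2) (b : Fin 3),
      (completeBipartiteGraph (Fin 2) (Fin 3)).Adj (Sum.inl a) (Sum.inr b) := by
    intro a b; exact Or.inl ⟨rfl, rfl⟩
  have adjRL : ∀ (b : Fin 3) (a : Fin 2),
      (completeBipartiteGraph (Fin 2) (Fin 3)).Adj (Sum.inr b) (Sum.inl a) := by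
    intro b a; exact Or.inr ⟨rfl, rfl⟩
  have H2 : ∀ c : Fin 2, ∃ d : Fin 2, d ≠ c := by decide
  have H3 : ∀ c : Fin 3, ∃ d : Fin 3, d ≠ c := by decide
  rintro (a | b) (a' | b') hij
  · exact absurd hij (by simp [completeBipartiteGraph])
  · obtain ⟨a2, ha2⟩ := H2 a
    obtain ⟨b2, hb2⟩ := H3 b'
    refine ⟨Walk.cons (adjLR a b2) (Walk.cons (adjRL b2 a2) (Walk.cons (adjLR a2 b') Walk.nil)),
      ?_⟩
    intro hmem
    simp only [Walk.edges_cons, Walk.edges_nil, List.mem_cons, List.not_mem_nil, or_false,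
      Sym2.eq_iff, Sum.inl.injEq, Sum.inr.injEq, reduceCtorEq] at hmem
    tauto
  · obtain ⟨a2, ha2⟩ := H2 a'
    obtain ⟨b2, hb2⟩ := H3 b
    refine ⟨Walk.cons (adjRL b a2) (Walk.cons (adjLR a2 b2) (Walk.cons (adjRL b2 a') Walk.nil)),
      ?_⟩
    intro hmem
    simp only [Walk.edges_cons, Walk.edges_nil, List.mem_cons, List.not_mem_nil, or_false,
      Sym2.eq_iff, Sum.inl.injEq, Sum.inr.injEq, reduceCtorEq] at hmem
    tauto
  · exact absurd hij (by simp [completeBipartiteGraph])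

lemma k23_hyp2 : ∀ (i0 j k : Fin 2 ⊕ Fin 3), j ≠ i0 → k ≠ i0 →
    ∃ wk : (completeBipartiteGraph (Fin 2) (Fin 3)).Walk j k, i0 ∉ wk.support := by
  have adjLR : ∀ (a : Fin 2) (b : Fin 3),
      (completeBipartiteGraph (Fin 2) (Fin 3)).Adj (Sum.inl a) (Sum.inr b) := by
    intro a b; exact Or.inl ⟨rfl, rfl⟩
  have adjRL : ∀ (b : Fin 3) (a : Fin 2),
      (completeBipartiteGraph (Fin 2) (Fin 3)).Adj (Sum.inr b) (Sum.inl a) := by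
    intro b a; exact Or.inr ⟨rfl, rfl⟩
  have H2 : ∀ c : Fin 2 ⊕ Fin 3, ∃ d : Fin 2, Sum.inl d ≠ c := by decide
  have H3 : ∀ c : Fin 2 ⊕ Fin 3, ∃ d : Fin 3, Sum.inr d ≠ c := by decide
  rintro i0 (a | b) (a' | b') hj hk
  · by_cases haa : a = a'
    · subst haa; exact ⟨Walk.nil, by simpa using hj.symm⟩
    · obtain ⟨b2, hb2⟩ := H3 i0
      refine ⟨Walk.cons (adjLR a b2) (Walk.cons (adjRL b2 a') Walk.nil), ?_⟩
      intro hmem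
      simp only [Walk.support_cons, Walk.support_nil, List.mem_cons, List.not_mem_nil,
        or_false] at hmem
      rcases hmem with h | h | h
      exacts [hj h.symm, hb2 h.symm, hk h.symm]
  · refine ⟨Walk.cons (adjLR a b') Walk.nil, ?_⟩
    intro hmem
    simp only [Walk.support_cons, Walk.support_nil, List.mem_cons, List.not_mem_nil,
      or_false] at hmem
    rcases hmem with h | h
    exacts [hj h.symm, hk h.symm]
  · refine ⟨Walk.cons (adjRL b a') Walk.nil, ?_⟩
    intro hmem
    simp only [Walk.support_cons, Walk.support_nil, List.mem_cons, List.not_mem_nil,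
      or_false] at hmem
    rcases hmem with h | h
    exacts [hj h.symm, hk h.symm]
  · by_cases hbb : b = b'
    · subst hbb; exact ⟨Walk.nil, by simpa using hj.symm⟩
    · obtain ⟨a2, ha2⟩ := H2 i0
      refine ⟨Walk.cons (adjRL b a2) (Walk.cons (adjLR a2 b') Walk.nil), ?_⟩
      intro hmem
      simp only [Walk.support_cons, Walk.support_nil, List.mem_cons, List.not_mem_nil,
        or_false] at hmem
      rcases hmem with h | h | h
      exacts [hj h.symm, ha2 h.symm, hk h.symm]

lemma k23_hyp3 : ∀ i : Fin 2 ⊕ Fin 3, ∃ j, (completeBipartiteGraph (Fin 2) (Fin 3)).Adj j i := by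
  rintro (a | b)
  · exact ⟨Sum.inr 0, Or.inr ⟨rfl, rfl⟩⟩
  · exact ⟨Sum.inl 0, Or.inl ⟨rfl, rfl⟩⟩

end HypVerify

section DistHelpers
variable {V : Type*} {G : SimpleGraph V} {u v : V}

lemma dist_ge_two (hc : G.Connected) (hne : u ≠ v) (hadj : ¬ G.Adj u v) :
    2 ≤ G.dist u v := by
  have h0 : G.dist u v ≠ 0 := by
    rw [Ne, hc.dist_eq_zero_iff]; exact hne
  have h1 : G.dist u v ≠ 1 := fun h => hadj (dist_eq_one_iff_adj.mp h)
  omega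

lemma dist_ge_three (hc : G.Connected) (hne : u ≠ v) (hadj : ¬ G.Adj u v)
    (hcom : ∀ t, ¬ (G.Adj u t ∧ G.Adj t v)) : 3 ≤ G.dist u v := by
  have h2 : 2 ≤ G.dist u v := dist_ge_two hc hne hadj
  rcases Nat.lt_or_ge (G.dist u v) 3 with h | h
  · exfalso
    have hd : G.dist u v = 2 := by omega
    obtain ⟨p, hp⟩ := hc.exists_walk_length_eq_dist u v
    rw [hd] at hp
    cases p with
    | nil => simp at hp
    | cons h1 q =>
      cases q with
      | nil => simp at hp
      | cons h2' q2 =>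
        cases q2 with
        | nil => exact hcom _ ⟨h1, h2'⟩
        | cons h3 q3 =>
          rw [Walk.length_cons, Walk.length_cons, Walk.length_cons] at hp
          omega
  · exact h

end DistHelpers

lemma sum_base_corr {V : Type*} [DecidableEq V] (s corr : Finset V) (g : V → ℤ) (base : ℤ)
    (hsub : corr ⊆ s) (hbase : ∀ u ∈ s, u ∉ corr → g u = base) :
    ∑ u ∈ s, g u = base * s.card + ∑ u ∈ corr, (g u - base) := by
  have h1 : ∑ u ∈ corr, (g u - base) = ∑ u ∈ s, (g u - base) :=
    Finset.sum_subset hsub (fun u hu hnu => by rw [hbase u hu hnu]; ring)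
  rw [h1, Finset.sum_sub_distrib, Finset.sum_const, nsmul_eq_mul]
  ring


lemma maximalOuterplanar_connected {V : Type*} {G : SimpleGraph V}
    (hmax : MaximalOuterplanar G) (hne : Nonempty V) : G.Connected := by
  rw [connected_iff]
  refine ⟨fun u v => ?_, hne⟩
  by_contra hreach
  have hne' : u ≠ v := fun h => hreach (h ▸ Reachable.refl u)
  have hadj : ¬ G.Adj u v := fun h => hreach h.reachable
  refine hmax.2 u v hne' hadj ⟨?_, ?_⟩
  · intro hm
    exact hmax.1.1 (bridge_minor k4_hyp1 k4_hyp2 k4_hyp3 hreach hm)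
  · intro hm
    exact hmax.1.2 (bridge_minor k23_hyp1 k23_hyp2 k23_hyp3 hreach hm)

set_option maxHeartbeats 1000000 in
/-- interior edge `xy` with common neighbors `w ≠ z`, where
`δ_xw = 0`, `δ_xz = 1`, `δ_yw = 1`, `δ_yz = 1`. -/
theorem interior_config_14 {V : Type*} [Fintype V]
    (G : SimpleGraph V) [DecidableRel G.Adj]
    (hmax : MaximalOuterplanar G)
    (x y w z : V) (hxy : G.Adj x y) (hd : G.degree x ≤ G.degree y)
    (hwz : w ≠ z)
    (hcom : G.neighborSet x ∩ G.neighborSet y = {w, z})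
    (hxw : ((G.neighborSet x ∩ G.neighborSet w) \ {y}).ncard = 0)
    (hxz : ((G.neighborSet x ∩ G.neighborSet z) \ {y}).ncard = 1)
    (hyw : ((G.neighborSet y ∩ G.neighborSet w) \ {x}).ncard = 1)
    (hyz : ((G.neighborSet y ∩ G.neighborSet z) \ {x}).ncard = 1) :
    (G.degree y < 2 * G.degree x →
      llyCurv G x y = 5 / (G.degree x : ℝ) + 6 / (G.degree y : ℝ) - 2) ∧
    (2 * G.degree x ≤ G.degree y →
      llyCurv G x y = 4 / (G.degree x : ℝ) + 8 / (G.degree y : ℝ) - 2) := by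
  classical
  -- membership characterizations
  have hmem : ∀ v : V, G.Adj x v ∧ G.Adj y v ↔ (v = w ∨ v = z) := by
    intro v
    have := Set.ext_iff.mp hcom v
    simpa [Set.mem_insert_iff] using this
  have haxw : G.Adj x w := ((hmem w).mpr (Or.inl rfl)).1
  have hayw : G.Adj y w := ((hmem w).mpr (Or.inl rfl)).2
  have haxz : G.Adj x z := ((hmem z).mpr (Or.inr rfl)).1
  have hayz : G.Adj y z := ((hmem z).mpr (Or.inr rfl)).2
  have hxwNone : ∀ v, G.Adj x v → G.Adj w v → v ≠ y → False := by
    intro v h1 h2 h3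
    have hempty : (G.neighborSet x ∩ G.neighborSet w) \ {y} = ∅ := by
      rwa [Set.ncard_eq_zero (Set.toFinite _)] at hxw
    exact Set.eq_empty_iff_forall_notMem.mp hempty v ⟨⟨h1, h2⟩, h3⟩
  have hwznadj : ¬ G.Adj w z := fun h => hxwNone z haxz h hayz.ne'
  obtain ⟨z', hz'set⟩ := Set.ncard_eq_one.mp hxz
  have hz'iff : ∀ v, (G.Adj x v ∧ G.Adj z v) ∧ v ≠ y ↔ v = z' := by
    intro v
    have := Set.ext_iff.mp hz'set v
    simpa using this
  have haxz' : G.Adj x z' := (((hz'iff z').mpr rfl).1).1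
  have hazz' : G.Adj z z' := (((hz'iff z').mpr rfl).1).2
  have hz'ney : z' ≠ y := ((hz'iff z').mpr rfl).2
  obtain ⟨w', hw'set⟩ := Set.ncard_eq_one.mp hyw
  have hw'iff : ∀ v, (G.Adj y v ∧ G.Adj w v) ∧ v ≠ x ↔ v = w' := by
    intro v
    have := Set.ext_iff.mp hw'set v
    simpa using this
  have hayw' : G.Adj y w' := (((hw'iff w').mpr rfl).1).1
  have haww' : G.Adj w w' := (((hw'iff w').mpr rfl).1).2
  have hw'nex : w' ≠ x := ((hw'iff w').mpr rfl).2
  obtain ⟨z'', hz''set⟩ := Set.ncard_eq_one.mp hyz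
  have hz''iff : ∀ v, (G.Adj y v ∧ G.Adj z v) ∧ v ≠ x ↔ v = z'' := by
    intro v
    have := Set.ext_iff.mp hz''set v
    simpa using this
  have hayz'' : G.Adj y z'' := (((hz''iff z'').mpr rfl).1).1
  have hazz'' : G.Adj z z'' := (((hz''iff z'').mpr rfl).1).2
  have hz''nex : z'' ≠ x := ((hz''iff z'').mpr rfl).2
  -- simple distinctness facts
  have hxny : x ≠ y := hxy.ne
  have hwnx : w ≠ x := haxw.ne'
  have hwny : w ≠ y := hayw.ne'
  have hznx : z ≠ x := haxz.ne'
  have hzny : z ≠ y := hayz.ne'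
  have hz'nx : z' ≠ x := haxz'.ne'
  have hz'nz : z' ≠ z := hazz'.ne'
  have hz'nw : z' ≠ w := fun h => hwznadj (h ▸ hazz').symm
  have hw'ny : w' ≠ y := hayw'.ne'
  have hw'nw : w' ≠ w := haww'.ne'
  have hw'nz : w' ≠ z := fun h => hwznadj (h ▸ haww')
  have hz''ny : z'' ≠ y := hayz''.ne'
  have hz''nz : z'' ≠ z := hazz''.ne'
  have hz''nw : z'' ≠ w := fun h => hwznadj (h ▸ hazz'').symm
  -- non-adjacency facts from the common-neighborhood characterization
  have hnadj_yz' : ¬ G.Adj y z' := by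
    intro h
    rcases (hmem z').mp ⟨haxz', h⟩ with h' | h'
    · exact hwznadj (h' ▸ hazz').symm
    · exact hz'nz h'
  have hnadj_xw' : ¬ G.Adj x w' := by
    intro h
    rcases (hmem w').mp ⟨h, hayw'⟩ with h' | h'
    · exact hw'nw h'
    · exact hwznadj (h' ▸ haww')
  have hnadj_xz'' : ¬ G.Adj x z'' := by
    intro h
    rcases (hmem z'').mp ⟨h, hayz''⟩ with h' | h'
    · exact hwznadj (h' ▸ hazz'').symm
    · exact hz''nz h'
  have hnadj_wz' : ¬ G.Adj w z' := fun h => hxwNone z' haxz' h hz'ney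
  -- connectivity
  have hconn : G.Connected := maximalOuterplanar_connected hmax ⟨x⟩
  -- w' ≠ z'' via a K_{2,3} minor
  have hw'nez'' : w' ≠ z'' := by
    intro h
    apply hmax.1.2
    refine k23_minor_of w z {x} {y} {w'} (connected_induce_single x)
      (connected_induce_single y) (connected_induce_single w') hwz
      (by simp [hwnx]) (by simp [hwny]) (by simp [Ne.symm hw'nw])
      (by simp [hznx]) (by simp [hzny]) (by simp [Ne.symm hw'nz])
      (by simp [hxny]) (by simp [hw'nex.symm]) (by simp [Ne.symm hw'ny])
      ⟨x, rfl, haxw.symm⟩ ⟨y, rfl, hayw.symm⟩ ⟨w', rfl, haww'⟩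
      ⟨x, rfl, haxz.symm⟩ ⟨y, rfl, hayz.symm⟩ ⟨w', rfl, by rw [h]; exact hazz''⟩
  have hnadj_wz'' : ¬ G.Adj w z'' := by
    intro h
    exact hw'nez'' ((hw'iff z'').mp ⟨⟨hayz'', h⟩, hz''nex⟩).symm
  have hnadj_zw' : ¬ G.Adj z w' := by
    intro h
    exact hw'nez'' (((hz''iff w').mp ⟨⟨hayw', h⟩, hw'nex⟩) ▸ rfl)
  have hnadj_w_gen : ∀ u', G.Adj y u' → u' ≠ x → u' ≠ w' → ¬ G.Adj w u' := by
    intro u' h1 h2 h3 h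
    exact h3 ((hw'iff u').mp ⟨⟨h1, h⟩, h2⟩)
  have hnadj_z_gen : ∀ u', G.Adj y u' → u' ≠ x → u' ≠ z'' → ¬ G.Adj z u' := by
    intro u' h1 h2 h3 h
    exact h3 ((hz''iff u').mp ⟨⟨h1, h⟩, h2⟩)
  have hnadj_x_gen : ∀ u', G.Adj y u' → u' ≠ w → u' ≠ z → ¬ G.Adj x u' := by
    intro u' h1 h2 h3 h
    rcases (hmem u').mp ⟨h, h1⟩ with h' | h'
    exacts [h2 h', h3 h']
  have hnadj_y_gen : ∀ u, G.Adj x u → u ≠ w → u ≠ z → ¬ G.Adj y u := by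
    intro u h1 h2 h3 h
    rcases (hmem u).mp ⟨h1, h⟩ with h' | h'
    exacts [h2 h', h3 h']
  have hnadj_w_genx : ∀ u, G.Adj x u → u ≠ y → ¬ G.Adj w u :=
    fun u h1 h2 h => hxwNone u h1 h h2
  -- no vertex of N(x) \ {y,w,z} is adjacent to z'' (K4 minor)
  have hDz'' : ∀ u, G.Adj x u → u ≠ y → u ≠ w → u ≠ z → ¬ G.Adj u z'' := by
    intro u h1 h2 h3 h4 h
    apply hmax.1.1
    refine k4_minor_of x y z ({u, z''} : Set V) (connected_induce_pair h)
      (by simp [h1.ne, Ne.symm hz''nex]) (by simp [Ne.symm h2, Ne.symm hz''ny])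
      (by simp [Ne.symm h4, Ne.symm hz''nz]) hxy haxz hayz
      ⟨u, by simp, h1⟩ ⟨z'', by simp, hayz''⟩ ⟨z'', by simp, hazz''⟩
  -- the distance-3 fact
  have dist3 : ∀ u, G.Adj x u → u ≠ y → u ≠ w → u ≠ z →
      ∀ u', G.Adj y u' → u' ≠ x → u' ≠ w → u' ≠ z → u' ≠ z'' → 3 ≤ G.dist u u' := by
    intro u h1 h2 h3 h4 u' k1 k2 k3 k4 k5
    have huu' : u ≠ u' := by
      intro h; subst h; exact (hnadj_x_gen u k1 k3 k4) h1
    apply dist_ge_three hconn huu'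
    · intro h
      apply hmax.1.2
      refine k23_minor_of x y {w} {z} ({u, u'} : Set V) (connected_induce_single w)
        (connected_induce_single z) (connected_induce_pair h) hxny
        (by simp [hwnx.symm]) (by simp [hznx.symm]) (by simp [h1.ne, Ne.symm k2])
        (by simp [hwny.symm]) (by simp [hzny.symm]) (by simp [Ne.symm h2, k1.ne])
        (by simp [hwz]) (by simp [Ne.symm h3, Ne.symm k3]) (by simp [Ne.symm h4, Ne.symm k4])
        ⟨w, rfl, haxw⟩ ⟨z, rfl, haxz⟩ ⟨u, by simp, h1⟩
        ⟨w, rfl, hayw⟩ ⟨z, rfl, hayz⟩ ⟨u', by simp, k1⟩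
    · rintro t ⟨ht1, ht2⟩
      have htnx : t ≠ x := by
        intro h; subst h; exact (hnadj_x_gen u' k1 k3 k4) ht2
      have htny : t ≠ y := by
        intro h; subst h; exact (hnadj_y_gen u h1 h3 h4) ht1.symm
      have htnw : t ≠ w := by
        intro h; subst h; exact (hnadj_w_genx u h1 h2) ht1.symm
      have htnz : t ≠ z := by
        intro h; subst h; exact (hnadj_z_gen u' k1 k2 k5) ht2
      apply hmax.1.2
      refine k23_minor_of x y {w} {z} ({u, t, u'} : Set V) (connected_induce_single w)
        (connected_induce_single z) (connected_induce_triple ht1 ht2) hxny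
        (by simp [hwnx.symm]) (by simp [hznx.symm])
        (by simp [h1.ne, Ne.symm htnx, Ne.symm k2])
        (by simp [hwny.symm]) (by simp [hzny.symm])
        (by simp [Ne.symm h2, Ne.symm htny, k1.ne])
        (by simp [hwz]) (by simp [Ne.symm h3, Ne.symm htnw, Ne.symm k3])
        (by simp [Ne.symm h4, Ne.symm htnz, Ne.symm k4])
        ⟨w, rfl, haxw⟩ ⟨z, rfl, haxz⟩ ⟨u, by simp, h1⟩
        ⟨w, rfl, hayw⟩ ⟨z, rfl, hayz⟩ ⟨u', by simp, k1⟩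
  -- degrees
  have hmpos : 0 < G.degree x := by
    rw [← card_neighborFinset_eq_degree]
    exact Finset.card_pos.mpr ⟨y, by simp [hxy]⟩
  have hnpos : 0 < G.degree y := by
    rw [← card_neighborFinset_eq_degree]
    exact Finset.card_pos.mpr ⟨x, by simp [hxy.symm]⟩
  -- the parameter A
  set A : ℤ := if G.degree y < 2 * G.degree x then 1 else 0 with hA
  have hA0 : 0 ≤ A := by rw [hA]; split_ifs <;> omega
  have hA1 : A ≤ 1 := by rw [hA]; split_ifs <;> omega
  -- the cost function and the optimal transport function f
  set c : V → ℤ := fun u => if u = x ∨ u = z then 0 else if u = y then 1 else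
    if u = w then A else -1 with hc
  set T : Finset V := insert x (G.neighborFinset x) with hT
  have hxT : x ∈ T := Finset.mem_insert_self _ _
  have hTne : T.Nonempty := ⟨x, hxT⟩
  set f : V → ℤ := fun v => T.inf' hTne (fun u => (G.dist v u : ℤ) + c u) with hf
  have hmemT : ∀ t, t ∈ T ↔ t = x ∨ G.Adj x t := by
    intro t; simp [hT, Finset.mem_insert, mem_neighborFinset]
  have cx : c x = 0 := by simp [hc]
  have cz : c z = 0 := by simp [hc]
  have cy : c y = 1 := by simp [hc, Ne.symm hxny, Ne.symm hzny]
  have cw : c w = A := by simp [hc, hwnx, hwny, hwz]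
  have cother : ∀ t, t ≠ x → t ≠ y → t ≠ w → t ≠ z → c t = -1 := by
    intro t h1 h2 h3 h4; simp [hc, h1, h2, h3, h4]
  have cge : ∀ t, -1 ≤ c t := by
    intro t; rw [hc]; dsimp only; split_ifs <;> linarith [hA0]
  -- distance helpers (with integer casts)
  have dAdj : ∀ {a b : V}, G.Adj a b → (G.dist a b : ℤ) = 1 := by
    intro a b h; exact_mod_cast dist_eq_one_iff_adj.mpr h
  have dge0 : ∀ a b : V, 0 ≤ (G.dist a b : ℤ) := fun a b => Int.natCast_nonneg _
  have dge1 : ∀ a b : V, a ≠ b → 1 ≤ (G.dist a b : ℤ) := by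
    intro a b h; exact_mod_cast hconn.pos_dist_of_ne h
  have dge2 : ∀ a b : V, a ≠ b → ¬ G.Adj a b → 2 ≤ (G.dist a b : ℤ) := by
    intro a b h1 h2; exact_mod_cast dist_ge_two hconn h1 h2
  have f_le : ∀ (v t : V), t ∈ T → f v ≤ (G.dist v t : ℤ) + c t := by
    intro v t ht; exact Finset.inf'_le _ ht
  have f_ge : ∀ (v : V) (b : ℤ), (∀ t ∈ T, b ≤ (G.dist v t : ℤ) + c t) → b ≤ f v := by
    intro v b h; exact Finset.le_inf' _ _ h
  -- values of f
  have fx : f x = 0 := by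
    refine le_antisymm (by simpa [SimpleGraph.dist_self, cx] using f_le x x hxT) (f_ge x 0 ?_)
    intro t ht
    rcases (hmemT t).mp ht with rfl | hadj
    · simp [SimpleGraph.dist_self, cx]
    · have h1 : (G.dist x t : ℤ) = 1 := dAdj hadj
      have h2 := cge t
      omega
  have fy : f y = 1 := by
    have hyT : y ∈ T := (hmemT y).mpr (Or.inr hxy)
    refine le_antisymm (by simpa [SimpleGraph.dist_self, cy] using f_le y y hyT) (f_ge y 1 ?_)
    intro t ht
    rcases (hmemT t).mp ht with rfl | hadj
    · rw [dAdj hxy.symm, cx]; omega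
    · by_cases h1 : t = y
      · rw [h1, SimpleGraph.dist_self, cy]; omega
      · by_cases h2 : t = w
        · rw [h2, dAdj hayw, cw]; linarith [hA0]
        · by_cases h3 : t = z
          · rw [h3, dAdj hayz, cz]; omega
          · have hd := dge2 y t (fun h => h1 h.symm) (hnadj_y_gen t hadj h2 h3)
            rw [cother t hadj.ne' h1 h2 h3]; omega
  have fw : f w = A := by
    have hwT : w ∈ T := (hmemT w).mpr (Or.inr haxw)
    refine le_antisymm (by simpa [SimpleGraph.dist_self, cw] using f_le w w hwT) (f_ge w A ?_)
    intro t ht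
    rcases (hmemT t).mp ht with rfl | hadj
    · rw [dAdj haxw.symm, cx]; linarith [hA1]
    · by_cases h1 : t = y
      · rw [h1, dAdj hayw.symm, cy]; linarith [hA1]
      · by_cases h2 : t = w
        · rw [h2, SimpleGraph.dist_self, cw]; omega
        · by_cases h3 : t = z
          · have hd := dge2 w z hwz hwznadj
            rw [h3, cz]; linarith [hA1]
          · have hd := dge2 w t (fun h => h2 h.symm) (hnadj_w_genx t hadj h1)
            rw [cother t hadj.ne' h1 h2 h3]; linarith [hA1]
  have fz : f z = 0 := by
    have hzT : z ∈ T := (hmemT z).mpr (Or.inr haxz)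
    refine le_antisymm (by simpa [SimpleGraph.dist_self, cz] using f_le z z hzT) (f_ge z 0 ?_)
    intro t ht
    rcases (hmemT t).mp ht with rfl | hadj
    · rw [dAdj haxz.symm, cx]; omega
    · by_cases h1 : t = y
      · rw [h1, dAdj hayz.symm, cy]; omega
      · by_cases h2 : t = w
        · have hd := dge2 z w (Ne.symm hwz) (fun h => hwznadj h.symm)
          rw [h2, cw]; linarith [hA0]
        · by_cases h3 : t = z
          · rw [h3, SimpleGraph.dist_self, cz]; omega
          · have hd := dge1 z t (fun h => h3 h.symm)
            rw [cother t hadj.ne' h1 h2 h3]; omega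
  have fgen_x : ∀ u, G.Adj x u → u ≠ y → u ≠ w → u ≠ z → f u = -1 := by
    intro u h1 h2 h3 h4
    have huT : u ∈ T := (hmemT u).mpr (Or.inr h1)
    refine le_antisymm
      (by simpa [SimpleGraph.dist_self, cother u h1.ne' h2 h3 h4] using f_le u u huT)
      (f_ge u (-1) ?_)
    intro t ht
    have := cge t
    have := dge0 u t
    omega
  have fz'v : f z' = -1 := fgen_x z' haxz' hz'ney hz'nw hz'nz
  have fw'v : f w' = A + 1 := by
    have hwT : w ∈ T := (hmemT w).mpr (Or.inr haxw)
    refine le_antisymm (by rw [hf]; calc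
      T.inf' hTne (fun u => (G.dist w' u : ℤ) + c u) ≤ (G.dist w' w : ℤ) + c w :=
        Finset.inf'_le _ hwT
      _ = A + 1 := by rw [dAdj haww'.symm, cw]; ring) (f_ge w' (A + 1) ?_)
    intro t ht
    rcases (hmemT t).mp ht with htx | hadj
    · have hd := dge2 w' x hw'nex (fun h => hnadj_xw' h.symm)
      rw [htx, cx]; linarith [hA1]
    · by_cases h1 : t = y
      · rw [h1, dAdj hayw'.symm, cy]; linarith [hA1]
      · by_cases h2 : t = w
        · rw [h2, dAdj haww'.symm, cw]; linarith
        · by_cases h3 : t = z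
          · have hd := dge2 w' z hw'nz (fun h => hnadj_zw' h.symm)
            rw [h3, cz]; linarith [hA1]
          · have hd : 3 ≤ (G.dist w' t : ℤ) := by
              rw [SimpleGraph.dist_comm]
              exact_mod_cast dist3 t hadj h1 h2 h3 w' hayw' hw'nex hw'nw hw'nz hw'nez''
            rw [cother t hadj.ne' h1 h2 h3]; linarith [hA1]
  have fz''v : f z'' = 1 := by
    have hzT : z ∈ T := (hmemT z).mpr (Or.inr haxz)
    refine le_antisymm (by
      have := f_le z'' z hzT
      rwa [dAdj hazz''.symm, cz, add_zero] at this) (f_ge z'' 1 ?_)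
    intro t ht
    rcases (hmemT t).mp ht with htx | hadj
    · have hd := dge2 z'' x hz''nex (fun h => hnadj_xz'' h.symm)
      rw [htx, cx]; omega
    · by_cases h1 : t = y
      · rw [h1, dAdj hayz''.symm, cy]; omega
      · by_cases h2 : t = w
        · have hd := dge1 z'' w hz''nw
          rw [h2, cw]; linarith [hA0]
        · by_cases h3 : t = z
          · rw [h3, dAdj hazz''.symm, cz]; omega
          · have hd := dge2 z'' t
              (fun h => hnadj_xz'' (h ▸ hadj))
              (fun h => hDz'' t hadj h1 h2 h3 h.symm)
            rw [cother t hadj.ne' h1 h2 h3]; omega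
  have fgen_y : ∀ u', G.Adj y u' → u' ≠ x → u' ≠ w → u' ≠ z → u' ≠ w' → u' ≠ z'' →
      f u' = 2 := by
    intro u' k1 k2 k3 k4 k5 k6
    have hyT : y ∈ T := (hmemT y).mpr (Or.inr hxy)
    refine le_antisymm (by
      have := f_le u' y hyT
      rwa [dAdj k1.symm, cy] at this) (f_ge u' 2 ?_)
    intro t ht
    rcases (hmemT t).mp ht with htx | hadj
    · have hd := dge2 u' x k2 (fun h => hnadj_x_gen u' k1 k3 k4 h.symm)
      rw [htx, cx]; omega
    · by_cases h1 : t = y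
      · rw [h1, dAdj k1.symm, cy]; omega
      · by_cases h2 : t = w
        · have hd := dge2 u' w k3 (fun h => hnadj_w_gen u' k1 k2 k5 h.symm)
          rw [h2, cw]; linarith [hA0]
        · by_cases h3 : t = z
          · have hd := dge2 u' z k4 (fun h => hnadj_z_gen u' k1 k2 k6 h.symm)
            rw [h3, cz]; omega
          · have hd : 3 ≤ (G.dist u' t : ℤ) := by
              rw [SimpleGraph.dist_comm]
              exact_mod_cast dist3 t hadj h1 h2 h3 u' k1 k2 k3 k4 k6
            rw [cother t hadj.ne' h1 h2 h3]; omega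
  -- f is 1-Lipschitz
  have flip : ∀ u v : V, |f u - f v| ≤ (G.dist u v : ℤ) := by
    have key : ∀ u v : V, f u - f v ≤ (G.dist u v : ℤ) := by
      intro u v
      obtain ⟨t, ht, hft⟩ := Finset.exists_mem_eq_inf' hTne (fun u0 => (G.dist v u0 : ℤ) + c u0)
      have h1 : f u ≤ (G.dist u t : ℤ) + c t := f_le u t ht
      have h2 : G.dist u t ≤ G.dist u v + G.dist v t := hconn.dist_triangle
      have h2' : (G.dist u t : ℤ) ≤ (G.dist u v : ℤ) + (G.dist v t : ℤ) := by exact_mod_cast h2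
      have h3 : f v = (G.dist v t : ℤ) + c t := hft
      omega
    intro u v
    rw [abs_sub_le_iff]
    refine ⟨key u v, ?_⟩
    rw [SimpleGraph.dist_comm] at *
    exact key v u
  have hfyx : f y - f x = 1 := by rw [fy, fx]; norm_num
  -- real-valued degree facts
  have hmR : (0 : ℝ) < G.degree x := by exact_mod_cast hmpos
  have hnR : (0 : ℝ) < G.degree y := by exact_mod_cast hnpos
  have hm0 : (G.degree x : ℝ) ≠ 0 := ne_of_gt hmR
  have hn0 : (G.degree y : ℝ) ≠ 0 := ne_of_gt hnR
  have hdR : (G.degree x : ℝ) ≤ G.degree y := by exact_mod_cast hd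
  set tR : ℝ := (4 + (A : ℝ)) / G.degree x + (8 - 2 * (A : ℝ)) / G.degree y - 2 with htR
  -- the sums for f
  have corrX_sub : ({y, w, z} : Finset V) ⊆ G.neighborFinset x := by
    intro u hu
    simp only [Finset.mem_insert, Finset.mem_singleton] at hu
    rcases hu with rfl | rfl | rfl <;> simp [mem_neighborFinset, hxy, haxw, haxz]
  have hsum_x : ∑ u ∈ G.neighborFinset x, (f u - f x) = A + 4 - (G.degree x : ℤ) := by
    rw [sum_base_corr (G.neighborFinset x) {y, w, z} _ (-1) corrX_sub ?base]
    case base =>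
      intro u hu hnu
      simp only [Finset.mem_insert, Finset.mem_singleton, not_or] at hnu
      rw [mem_neighborFinset] at hu
      rw [fgen_x u hu hnu.1 hnu.2.1 hnu.2.2, fx]
      norm_num
    rw [Finset.sum_insert (by simp [Ne.symm hwny, Ne.symm hzny]),
      Finset.sum_insert (by simp [hwz]), Finset.sum_singleton, fy, fx, fw, fz,
      card_neighborFinset_eq_degree]
    ring
  have corrY_sub : ({x, w, z, w', z''} : Finset V) ⊆ G.neighborFinset y := by
    intro u hu
    simp only [Finset.mem_insert, Finset.mem_singleton] at hu
    rcases hu with rfl | rfl | rfl | rfl | rfl <;>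
      simp [mem_neighborFinset, hxy.symm, hayw, hayz, hayw', hayz'']
  have hsum_y : ∑ u ∈ G.neighborFinset y, (f u - f y) = 2 * A + (G.degree y : ℤ) - 8 := by
    rw [sum_base_corr (G.neighborFinset y) {x, w, z, w', z''} _ 1 corrY_sub ?base]
    case base =>
      intro u hu hnu
      simp only [Finset.mem_insert, Finset.mem_singleton, not_or] at hnu
      rw [mem_neighborFinset] at hu
      rw [fgen_y u hu hnu.1 hnu.2.1 hnu.2.2.1 hnu.2.2.2.1 hnu.2.2.2.2, fy]
      norm_num
    rw [Finset.sum_insert (by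
        simp [hwnx.symm, hznx.symm, hw'nex.symm, hz''nex.symm]),
      Finset.sum_insert (by simp [hwz, Ne.symm hw'nw, Ne.symm hz''nw]),
      Finset.sum_insert (by simp [Ne.symm hw'nz, Ne.symm hz''nz]),
      Finset.sum_insert (by simp [hw'nez'']), Finset.sum_singleton,
      fx, fy, fw, fz, fw'v, fz''v, card_neighborFinset_eq_degree]
    ring
  -- value of the candidate
  have lapx : graphLap G f x = ((A : ℝ) + 4 - G.degree x) / G.degree x := by
    rw [graphLap]
    congr 1
    have : (∑ u ∈ G.neighborFinset x, ((f u : ℝ) - (f x : ℝ)))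
        = ((∑ u ∈ G.neighborFinset x, (f u - f x) : ℤ) : ℝ) := by push_cast; rfl
    rw [this, hsum_x]
    push_cast
    ring
  have lapy : graphLap G f y = (2 * (A : ℝ) + G.degree y - 8) / G.degree y := by
    rw [graphLap]
    congr 1
    have : (∑ u ∈ G.neighborFinset y, ((f u : ℝ) - (f y : ℝ)))
        = ((∑ u ∈ G.neighborFinset y, (f u - f y) : ℤ) : ℝ) := by push_cast; rfl
    rw [this, hsum_y]
    push_cast
    ring
  have hr0 : graphLap G f x - graphLap G f y = tR := by
    rw [lapx, lapy, htR]
    field_simp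
    ring
  -- the defining set of the curvature
  have hlly : llyCurv G x y = sInf {r : ℝ | ∃ g : V → ℤ,
      (∀ u v : V, |g u - g v| ≤ (G.dist u v : ℤ)) ∧ g y - g x = 1 ∧
      r = graphLap G g x - graphLap G g y} := rfl
  have hmemS : tR ∈ {r : ℝ | ∃ g : V → ℤ,
      (∀ u v : V, |g u - g v| ≤ (G.dist u v : ℤ)) ∧ g y - g x = 1 ∧
      r = graphLap G g x - graphLap G g y} := ⟨f, flip, hfyx, hr0.symm⟩
  -- the lower bound
  have hlow : ∀ r ∈ {r : ℝ | ∃ g : V → ℤ,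
      (∀ u v : V, |g u - g v| ≤ (G.dist u v : ℤ)) ∧ g y - g x = 1 ∧
      r = graphLap G g x - graphLap G g y}, tR ≤ r := by
    rintro r ⟨g, hg, hgyx, rfl⟩
    set A' : ℤ := g w - g x with hA'
    set B' : ℤ := g z - g x with hB'
    have ewx : |g w - g x| ≤ 1 := by have := hg w x; rwa [dAdj haxw.symm] at this
    have ewy : |g w - g y| ≤ 1 := by have := hg w y; rwa [dAdj hayw.symm] at this
    have ezx : |g z - g x| ≤ 1 := by have := hg z x; rwa [dAdj haxz.symm] at this
    have ezy : |g z - g y| ≤ 1 := by have := hg z y; rwa [dAdj hayz.symm] at this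
    have hA'0 : 0 ≤ A' := by rw [hA']; rw [abs_le] at ewy; omega
    have hA'1 : A' ≤ 1 := by rw [hA']; rw [abs_le] at ewx; omega
    have hB'0 : 0 ≤ B' := by rw [hB']; rw [abs_le] at ezy; omega
    have hB'1 : B' ≤ 1 := by rw [hB']; rw [abs_le] at ezx; omega
    -- pointwise bounds at x
    set L : V → ℤ := fun u => if u = y then 1 else if u = w then A' else if u = z then B' else
      if u = z' then B' - 1 else -1 with hL
    have hLy : L y = 1 := by rw [hL]; simp
    have hLw : L w = A' := by rw [hL]; simp [hwny]
    have hLz : L z = B' := by rw [hL]; simp [hzny, Ne.symm hwz]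
    have hLz' : L z' = B' - 1 := by rw [hL]; simp [hz'ney, hz'nw, hz'nz]
    have hLoth : ∀ u, u ≠ y → u ≠ w → u ≠ z → u ≠ z' → L u = -1 := by
      intro u h1 h2 h3 h4; rw [hL]; simp [h1, h2, h3, h4]
    have hptx : ∀ u ∈ G.neighborFinset x, L u ≤ g u - g x := by
      intro u hu
      rw [mem_neighborFinset] at hu
      by_cases h1 : u = y
      · rw [h1, hLy, h1] at *; omega
      · by_cases h2 : u = w
        · rw [h2, hLw]
        · by_cases h3 : u = z
          · rw [h3, hLz]
          · by_cases h4 : u = z'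
            · rw [h4, hLz']
              have := hg z' z
              rw [dAdj hazz'.symm, abs_le] at this
              omega
            · rw [hLoth u h1 h2 h3 h4]
              have := hg u x
              rw [dAdj hu.symm, abs_le] at this
              omega
    have hsx : A' + 2 * B' + 4 - (G.degree x : ℤ) ≤
        ∑ u ∈ G.neighborFinset x, (g u - g x) := by
      have hle := Finset.sum_le_sum hptx
      have corrX'_sub : ({y, w, z, z'} : Finset V) ⊆ G.neighborFinset x := by
        intro u hu
        simp only [Finset.mem_insert, Finset.mem_singleton] at hu
        rcases hu with rfl | rfl | rfl | rfl <;>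
          simp [mem_neighborFinset, hxy, haxw, haxz, haxz']
      have heq : ∑ u ∈ G.neighborFinset x, L u =
          (-1) * (G.degree x : ℤ) + (A' + 2 * B' + 4) := by
        rw [sum_base_corr (G.neighborFinset x) {y, w, z, z'} L (-1) corrX'_sub ?base]
        case base =>
          intro u hu hnu
          simp only [Finset.mem_insert, Finset.mem_singleton, not_or] at hnu
          exact hLoth u hnu.1 hnu.2.1 hnu.2.2.1 hnu.2.2.2
        rw [Finset.sum_insert (by simp [Ne.symm hwny, Ne.symm hzny, Ne.symm hz'ney]),
          Finset.sum_insert (by simp [hwz, Ne.symm hz'nw]),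
          Finset.sum_insert (by simp [Ne.symm hz'nz]), Finset.sum_singleton,
          hLy, hLw, hLz, hLz', card_neighborFinset_eq_degree]
        ring
      rw [heq] at hle
      omega
    -- pointwise bounds at y
    set M : V → ℤ := fun u => if u = x then -1 else if u = w then A' - 1 else
      if u = z then B' - 1 else if u = w' then A' else if u = z'' then B' else 1 with hM
    have hMx : M x = -1 := by rw [hM]; simp
    have hMw : M w = A' - 1 := by rw [hM]; simp [hwnx]
    have hMz : M z = B' - 1 := by rw [hM]; simp [hznx, Ne.symm hwz]
    have hMw' : M w' = A' := by rw [hM]; simp [hw'nex, hw'nw, hw'nz]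
    have hMz'' : M z'' = B' := by rw [hM]; simp [hz''nex, hz''nw, hz''nz, Ne.symm hw'nez'']
    have hMoth : ∀ u, u ≠ x → u ≠ w → u ≠ z → u ≠ w' → u ≠ z'' → M u = 1 := by
      intro u h1 h2 h3 h4 h5; rw [hM]; simp [h1, h2, h3, h4, h5]
    have hpty : ∀ u ∈ G.neighborFinset y, g u - g y ≤ M u := by
      intro u hu
      rw [mem_neighborFinset] at hu
      by_cases h1 : u = x
      · rw [h1, hMx]; omega
      · by_cases h2 : u = w
        · rw [h2, hMw]; omega
        · by_cases h3 : u = z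
          · rw [h3, hMz]; omega
          · by_cases h4 : u = w'
            · rw [h4, hMw']
              have := hg w' w
              rw [dAdj haww'.symm, abs_le] at this
              omega
            · by_cases h5 : u = z''
              · rw [h5, hMz'']
                have := hg z'' z
                rw [dAdj hazz''.symm, abs_le] at this
                omega
              · rw [hMoth u h1 h2 h3 h4 h5]
                have := hg u y
                rw [dAdj hu.symm, abs_le] at this
                omega
    have hsy : ∑ u ∈ G.neighborFinset y, (g u - g y) ≤
        2 * A' + 2 * B' + (G.degree y : ℤ) - 8 := by
      have hle := Finset.sum_le_sum hpty
      have heq : ∑ u ∈ G.neighborFinset y, M u =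
          1 * (G.degree y : ℤ) + (2 * A' + 2 * B' - 8) := by
        rw [sum_base_corr (G.neighborFinset y) {x, w, z, w', z''} M 1 corrY_sub ?base]
        case base =>
          intro u hu hnu
          simp only [Finset.mem_insert, Finset.mem_singleton, not_or] at hnu
          exact hMoth u hnu.1 hnu.2.1 hnu.2.2.1 hnu.2.2.2.1 hnu.2.2.2.2
        rw [Finset.sum_insert (by simp [hwnx.symm, hznx.symm, hw'nex.symm, hz''nex.symm]),
          Finset.sum_insert (by simp [hwz, Ne.symm hw'nw, Ne.symm hz''nw]),
          Finset.sum_insert (by simp [Ne.symm hw'nz, Ne.symm hz''nz]),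
          Finset.sum_insert (by simp [hw'nez'']), Finset.sum_singleton,
          hMx, hMw, hMz, hMw', hMz'', card_neighborFinset_eq_degree]
        ring
      rw [heq] at hle
      omega
    -- pass to the real quotients
    have castx : (∑ u ∈ G.neighborFinset x, ((g u : ℝ) - (g x : ℝ)))
        = ((∑ u ∈ G.neighborFinset x, (g u - g x) : ℤ) : ℝ) := by push_cast; rfl
    have casty : (∑ u ∈ G.neighborFinset y, ((g u : ℝ) - (g y : ℝ)))
        = ((∑ u ∈ G.neighborFinset y, (g u - g y) : ℤ) : ℝ) := by push_cast; rfl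
    have hgx : ((A' : ℝ) + 2 * B' + 4 - G.degree x) / G.degree x ≤ graphLap G g x := by
      rw [graphLap, castx]
      refine (div_le_div_iff_of_pos_right hmR).mpr ?_
      calc ((A' : ℝ) + 2 * B' + 4 - G.degree x)
          = ((A' + 2 * B' + 4 - (G.degree x : ℤ) : ℤ) : ℝ) := by push_cast; ring
        _ ≤ _ := by exact_mod_cast hsx
    have hgy : graphLap G g y ≤ (2 * (A' : ℝ) + 2 * B' + G.degree y - 8) / G.degree y := by
      rw [graphLap, casty]
      refine (div_le_div_iff_of_pos_right hnR).mpr ?_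
      calc ((∑ u ∈ G.neighborFinset y, (g u - g y) : ℤ) : ℝ)
          ≤ ((2 * A' + 2 * B' + (G.degree y : ℤ) - 8 : ℤ) : ℝ) := by exact_mod_cast hsy
        _ = 2 * (A' : ℝ) + 2 * B' + G.degree y - 8 := by push_cast; ring
    have hbound : ((A' : ℝ) + 2 * B' + 4 - G.degree x) / G.degree x
        - (2 * (A' : ℝ) + 2 * B' + G.degree y - 8) / G.degree y
        ≤ graphLap G g x - graphLap G g y := sub_le_sub hgx hgy
    -- key arithmetic case analysis
    have ha' : A' = 0 ∨ A' = 1 := by omega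
    have hb' : B' = 0 ∨ B' = 1 := by omega
    have hmainZ : (((A : ℤ) : ℝ) - A' - 2 * B') * G.degree y
        ≤ (2 * ((A : ℤ) : ℝ) - 2 * A' - 2 * B') * G.degree x := by
      by_cases hcase : G.degree y < 2 * G.degree x
      · have hAv : A = 1 := hA.trans (if_pos hcase)
        have hcR : (G.degree y : ℝ) ≤ 2 * G.degree x := by exact_mod_cast le_of_lt hcase
        rcases ha' with h1 | h1 <;> rcases hb' with h2 | h2 <;> rw [hAv, h1, h2] <;>
          push_cast <;> linarith [hmR, hnR, hdR, hcR]
      · have hAv : A = 0 := hA.trans (if_neg hcase)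
        have hcR : 2 * (G.degree x : ℝ) ≤ G.degree y := by
          exact_mod_cast not_lt.mp hcase
        rcases ha' with h1 | h1 <;> rcases hb' with h2 | h2 <;> rw [hAv, h1, h2] <;>
          push_cast <;> linarith [hmR, hnR, hdR, hcR]
    have hfrac : (((A : ℤ) : ℝ) - A' - 2 * B') / G.degree x
        ≤ (2 * ((A : ℤ) : ℝ) - 2 * A' - 2 * B') / G.degree y := by
      rw [div_le_div_iff₀ hmR hnR]; exact hmainZ
    refine le_trans ?_ hbound
    have id1 : ((A' : ℝ) + 2 * B' + 4 - G.degree x) / G.degree x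
        - (2 * (A' : ℝ) + 2 * B' + G.degree y - 8) / G.degree y
        = (2 * ((A : ℤ) : ℝ) - 2 * A' - 2 * B') / G.degree y
          - (((A : ℤ) : ℝ) - A' - 2 * B') / G.degree x + tR := by
      rw [htR]
      field_simp
      ring
    rw [id1]
    linarith [hfrac]
  -- conclusion
  have hbdd : BddBelow {r : ℝ | ∃ g : V → ℤ,
      (∀ u v : V, |g u - g v| ≤ (G.dist u v : ℤ)) ∧ g y - g x = 1 ∧
      r = graphLap G g x - graphLap G g y} := ⟨tR, fun r hr => hlow r hr⟩
  have hcurv : llyCurv G x y = tR := by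
    rw [hlly]
    exact le_antisymm (csInf_le hbdd hmemS) (le_csInf ⟨tR, hmemS⟩ hlow)
  constructor
  · intro hcase
    have hAv : A = 1 := hA.trans (if_pos hcase)
    rw [hcurv, htR, hAv]
    norm_num
  · intro hcase
    have hAv : A = 0 := hA.trans (if_neg (not_lt.mpr hcase))
    rw [hcurv, htR, hAv]
    norm_num
end

section
/- Let G be a finite simple maximal outerplanar graph and let xy be an edge of G with d_x ≤ d_y whose common neighborhood is N(x) ∩ N(y) = {w, z} with w ≠ z, such that |N(x) ∩ N(w) \ {y}| = 1, |N(x) ∩ N(z) \ {y}| = 1, |N(y) ∩ N(w) \ {x}| = 1, and |N(y) ∩ N(z) \ {x}| = 1. Then the Lin–Lu–Yau curvature satisfies κ(x,y) = 4/d_x + 8/d_y − 2. -/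
open SimpleGraph

section Helpers
variable {V : Type*} {A : Type*} {B : Type*}

lemma reach_of_map {GA : SimpleGraph A} {GB : SimpleGraph B} (φ : A → B)
    (h : ∀ u v, GA.Adj u v → GB.Reachable (φ u) (φ v)) {p q : A}
    (hr : GA.Reachable p q) : GB.Reachable (φ p) (φ q) := by
  obtain ⟨wlk⟩ := hr
  induction wlk with
  | nil => exact Reachable.refl _
  | cons ha _ ih => exact (h _ _ ha).trans ih

lemma invariant_of_reachable {GA : SimpleGraph A} (P : A → Prop)
    (h : ∀ u v, GA.Adj u v → (P u ↔ P v)) {p q : A} (hr : GA.Reachable p q) :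
    P p ↔ P q := by
  obtain ⟨wlk⟩ := hr
  induction wlk with
  | nil => exact Iff.rfl
  | cons ha _ ih => exact (h _ _ ha).trans ih

lemma connected_induce_of_hub {G : SimpleGraph V} (S : Set V) (hub : V) (hhub : hub ∈ S)
    (h : ∀ v ∈ S, v = hub ∨ G.Adj v hub) : (G.induce S).Connected := by
  rw [connected_iff]
  refine ⟨?_, ⟨⟨hub, hhub⟩⟩⟩
  have key : ∀ a : S, (G.induce S).Reachable a ⟨hub, hhub⟩ := by
    rintro ⟨a, ha⟩
    rcases h a ha with h1 | h2
    · subst h1; exact Reachable.refl _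
    · exact Adj.reachable (by simpa using h2)
  intro a b
  exact (key a).trans (key b).symm

lemma isMinorOf_K4 {G : SimpleGraph V} {p1 p2 p3 p4 : V}
    (h12 : G.Adj p1 p2) (h13 : G.Adj p1 p3) (h14 : G.Adj p1 p4)
    (h23 : G.Adj p2 p3) (h24 : G.Adj p2 p4) (h34 : G.Adj p3 p4) :
    (completeGraph (Fin 4)).IsMinorOf G := by
  refine ⟨fun i => {(![p1, p2, p3, p4]) i}, ?_, ?_, ?_⟩
  · intro i
    exact connected_induce_of_hub _ _ rfl (fun v hv => Or.inl hv)
  · intro i j hij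
    fin_cases i <;> fin_cases j <;>
      simp_all [Set.disjoint_singleton, h12.ne, h13.ne, h14.ne, h23.ne, h24.ne, h34.ne,
        h12.ne', h13.ne', h14.ne', h23.ne', h24.ne', h34.ne']
  · intro i j hij
    fin_cases i <;> fin_cases j <;> simp_all <;>
      first
        | exact h12 | exact h13 | exact h14 | exact h23 | exact h24 | exact h34
        | exact h12.symm | exact h13.symm | exact h14.symm | exact h23.symm
        | exact h24.symm | exact h34.symm

lemma isMinorOf_K23 {G : SimpleGraph V} {p1 p2 q1 q2 : V} (U : Set V)
    (hU : (G.induce U).Connected)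
    (hp : p1 ≠ p2) (hq : q1 ≠ q2)
    (hp1U : p1 ∉ U) (hp2U : p2 ∉ U) (hq1U : q1 ∉ U) (hq2U : q2 ∉ U)
    (h11 : G.Adj p1 q1) (h12 : G.Adj p1 q2) (h21 : G.Adj p2 q1) (h22 : G.Adj p2 q2)
    {u1 : V} (hu1 : u1 ∈ U) (hadj1 : G.Adj p1 u1)
    {u2 : V} (hu2 : u2 ∈ U) (hadj2 : G.Adj p2 u2) :
    (completeBipartiteGraph (Fin 2) (Fin 3)).IsMinorOf G := by
  refine ⟨fun i => Sum.elim (![{p1}, {p2}]) (![{q1}, {q2}, U]) i, ?_, ?_, ?_⟩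
  · rintro (i | i) <;> fin_cases i <;>
      first
        | exact connected_induce_of_hub _ _ rfl (fun v hv => Or.inl hv)
        | exact hU
  · rintro (i | i) (j | j) hij <;> fin_cases i <;> fin_cases j <;>
      simp_all [Set.disjoint_singleton, Set.disjoint_singleton_left,
        Set.disjoint_singleton_right, h11.ne, h12.ne, h21.ne, h22.ne,
        h11.ne', h12.ne', h21.ne', h22.ne', ne_comm]
  · rintro (i | i) (j | j) hij <;> fin_cases i <;> fin_cases j <;> simp_all <;>
      first
        | exact ⟨p1, rfl, q1, rfl, h11⟩
        | exact ⟨p1, rfl, q2, rfl, h12⟩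
        | exact ⟨p2, rfl, q1, rfl, h21⟩
        | exact ⟨p2, rfl, q2, rfl, h22⟩
        | exact ⟨p1, rfl, u1, hu1, hadj1⟩
        | exact ⟨p2, rfl, u2, hu2, hadj2⟩
        | exact ⟨q1, rfl, p1, rfl, h11.symm⟩
        | exact ⟨q1, rfl, p2, rfl, h21.symm⟩
        | exact ⟨q2, rfl, p1, rfl, h12.symm⟩
        | exact ⟨q2, rfl, p2, rfl, h22.symm⟩
        | exact ⟨u1, hu1, p1, rfl, hadj1.symm⟩
        | exact ⟨u2, hu2, p2, rfl, hadj2.symm⟩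
        | exact h11 | exact h12 | exact h21 | exact h22
        | exact h11.symm | exact h12.symm | exact h21.symm | exact h22.symm
        | exact ⟨u1, hu1, hadj1⟩ | exact ⟨u2, hu2, hadj2⟩
        | exact ⟨u1, hu1, hadj1.symm⟩ | exact ⟨u2, hu2, hadj2.symm⟩

end Helpers
section Transfer
variable {V : Type*} {W : Type*}

lemma minor_transfer {H : SimpleGraph W} {G : SimpleGraph V} {a b : V}
    (hab : ¬ G.Reachable a b)
    (hH2 : ∀ i j : W, H.Adj i j → ∀ s : W → Prop,
        (∀ p q, H.Adj p q → ¬((p = i ∧ q = j) ∨ (p = j ∧ q = i)) → (s p ↔ s q)) →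
        (s i ↔ s j))
    (hH3 : ∀ i₀ : W, ∀ s : W → Prop,
        (∀ p q, H.Adj p q → p ≠ i₀ → q ≠ i₀ → (s p ↔ s q)) →
        ∀ p q, p ≠ i₀ → q ≠ i₀ → (s p ↔ s q))
    (hH4 : ∀ i : W, ∃ j, H.Adj i j)
    (hm : H.IsMinorOf (G ⊔ fromEdgeSet {s(a, b)})) : H.IsMinorOf G := by
  classical
  set G' := G ⊔ fromEdgeSet {s(a, b)} with hG'
  set R : Set V := {v | G.Reachable a v} with hR
  have haR : a ∈ R := Reachable.refl a
  have hbR : b ∉ R := hab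
  have hedge : ∀ {u v : V}, G'.Adj u v →
      G.Adj u v ∨ (u = a ∧ v = b) ∨ (u = b ∧ v = a) := by
    intro u v huv
    rcases (sup_adj _ _ _ _).mp huv with h | h
    · exact Or.inl h
    · obtain ⟨hmem, -⟩ := (fromEdgeSet_adj _).mp h
      rw [Set.mem_singleton_iff, Sym2.eq_iff] at hmem
      exact Or.inr hmem
  have hside : ∀ {u v : V}, G.Adj u v → (u ∈ R ↔ v ∈ R) := by
    intro u v huv
    constructor
    · intro h; exact h.trans huv.reachable
    · intro h; exact h.trans huv.symm.reachable
  obtain ⟨Bm, hconn, hdisj, hcross⟩ := hm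
  -- dichotomy for branch sets not containing both a and b
  have dicho : ∀ S : Set V, (G'.induce S).Connected → (a ∉ S ∨ b ∉ S) →
      (G.induce S).Connected ∧ (S ⊆ R ∨ ∀ v ∈ S, v ∉ R) := by
    intro S hSconn hnab
    have hadjeq : ∀ p q : S, (G'.induce S).Adj p q ↔ (G.induce S).Adj p q := by
      rintro ⟨p, hp⟩ ⟨q, hq⟩
      constructor
      · intro h
        have h' : G'.Adj p q := by simpa using h
        rcases hedge h' with hG | ⟨rfl, rfl⟩ | ⟨rfl, rfl⟩
        · simpa using hG
        · rcases hnab with h1 | h1 <;> exact absurd (by assumption) h1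
        · rcases hnab with h1 | h1 <;> exact absurd (by assumption) h1
      · intro h
        have h' : G.Adj p q := by simpa using h
        simp only [comap_adj, Function.Embedding.coe_subtype]
        exact (sup_adj _ _ _ _).mpr (Or.inl h')
    have hgr : (G'.induce S) = (G.induce S) := by
      ext p q; exact hadjeq p q
    have hGconn : (G.induce S).Connected := hgr ▸ hSconn
    refine ⟨hGconn, ?_⟩
    obtain ⟨⟨s₀, hs₀⟩⟩ := hGconn.nonempty
    have hconst : ∀ p : S, ((p : V) ∈ R ↔ s₀ ∈ R) := by
      intro p
      exact invariant_of_reachable (fun q : S => (q : V) ∈ R)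
        (fun u v huv => hside (by simpa using huv)) (hGconn.preconnected p ⟨s₀, hs₀⟩)
    by_cases hs : s₀ ∈ R
    · left; intro v hv; exact (hconst ⟨v, hv⟩).mpr hs
    · right; intro v hv hvR; exact hs ((hconst ⟨v, hv⟩).mp hvR)
  by_cases hcase : ∃ i₀, a ∈ Bm i₀ ∧ b ∈ Bm i₀
  · -- a branch set contains both a and b
    obtain ⟨i₀, haB, hbB⟩ := hcase
    have hother : ∀ j, j ≠ i₀ → a ∉ Bm j ∧ b ∉ Bm j := by
      intro j hj
      constructor
      · intro h; exact (hdisj hj).ne_of_mem h haB rfl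
      · intro h; exact (hdisj hj).ne_of_mem h hbB rfl
    have hdichoj : ∀ j, j ≠ i₀ →
        (G.induce (Bm j)).Connected ∧ (Bm j ⊆ R ∨ ∀ v ∈ Bm j, v ∉ R) := by
      intro j hj
      exact dicho _ (hconn j) (Or.inl (hother j hj).1)
    -- all cross edges are G-edges
    have hcrossG : ∀ ⦃p q⦄, H.Adj p q → ∃ u ∈ Bm p, ∃ v ∈ Bm q, G.Adj u v := by
      intro p q hpq
      obtain ⟨u, hu, v, hv, huv⟩ := hcross hpq
      rcases hedge huv with hG | ⟨rfl, rfl⟩ | ⟨rfl, rfl⟩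
      · exact ⟨u, hu, v, hv, hG⟩
      · exfalso
        have hpi : p = i₀ := by
          by_contra hne; exact (hother p hne).1 hu
        have hqi : q = i₀ := by
          by_contra hne; exact (hother q hne).2 hv
        exact H.loopless.irrefl i₀ (by rwa [hpi, hqi] at hpq)
      · exfalso
        have hpi : p = i₀ := by
          by_contra hne; exact (hother p hne).2 hu
        have hqi : q = i₀ := by
          by_contra hne; exact (hother q hne).1 hv
        exact H.loopless.irrefl i₀ (by rwa [hpi, hqi] at hpq)
    -- side uniformity among branch sets ≠ i₀
    set s : W → Prop := fun j => Bm j ⊆ R with hs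
    have hsiff : ∀ j, j ≠ i₀ → ∀ u ∈ Bm j, (s j ↔ u ∈ R) := by
      intro j hj u hu
      constructor
      · intro h; exact h hu
      · intro h
        rcases (hdichoj j hj).2 with h1 | h1
        · exact h1
        · exact absurd h (h1 u hu)
    have hinv : ∀ p q, H.Adj p q → p ≠ i₀ → q ≠ i₀ → (s p ↔ s q) := by
      intro p q hpq hp hq
      obtain ⟨u, hu, v, hv, huv⟩ := hcrossG hpq
      rw [hsiff p hp u hu, hsiff q hq v hv]
      exact hside huv
    have hallside : ∀ p q, p ≠ i₀ → q ≠ i₀ → (s p ↔ s q) := hH3 i₀ s hinv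
    obtain ⟨j₀, hj₀⟩ := hH4 i₀
    have hj₀ne : j₀ ≠ i₀ := fun h => H.loopless.irrefl i₀ (h ▸ hj₀)
    have hconnIR : (G.induce (Bm i₀ ∩ R)).Connected := by
      set S := Bm i₀ with hS
      have haSR : a ∈ S ∩ R := ⟨haB, haR⟩
      set π : S → ↑(S ∩ R) := fun p =>
        if h : (p : V) ∈ R then ⟨p, p.2, h⟩ else ⟨a, haSR⟩ with hπ
      have hπadj : ∀ u v : S, (G'.induce S).Adj u v →
          (G.induce (S ∩ R)).Reachable (π u) (π v) := by
        rintro ⟨u, hu⟩ ⟨v, hv⟩ huv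
        have h' : G'.Adj u v := by simpa using huv
        rcases hedge h' with hG | ⟨rfl, rfl⟩ | ⟨rfl, rfl⟩
        · by_cases huR : u ∈ R
          · have hvR : v ∈ R := (hside hG).mp huR
            have : (G.induce (S ∩ R)).Adj ⟨u, hu, huR⟩ ⟨v, hv, hvR⟩ := by
              simpa using hG
            simp only [hπ, dif_pos huR, dif_pos hvR]
            exact this.reachable
          · have hvR : v ∉ R := fun h => huR ((hside hG).mpr h)
            simp only [hπ, dif_neg huR, dif_neg hvR]
            exact Reachable.refl _
        · simp only [hπ, dif_pos haR, dif_neg hbR]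
          exact Reachable.refl _
        · simp only [hπ, dif_neg hbR, dif_pos haR]
          exact Reachable.refl _
      rw [connected_iff]
      refine ⟨?_, ⟨⟨a, haSR⟩⟩⟩
      rintro ⟨p, hp, hpR⟩ ⟨q, hq, hqR⟩
      have := reach_of_map π hπadj ((hconn i₀).preconnected ⟨p, hp⟩ ⟨q, hq⟩)
      simpa only [hπ, dif_pos hpR, dif_pos hqR] using this
    have hconnDR : (G.induce (Bm i₀ \ R)).Connected := by
      set S := Bm i₀ with hS
      have hbSR : b ∈ S \ R := ⟨hbB, hbR⟩
      set π : S → ↑(S \ R) := fun p =>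
        if h : (p : V) ∈ R then ⟨b, hbSR⟩ else ⟨p, p.2, h⟩ with hπ
      have hπadj : ∀ u v : S, (G'.induce S).Adj u v →
          (G.induce (S \ R)).Reachable (π u) (π v) := by
        rintro ⟨u, hu⟩ ⟨v, hv⟩ huv
        have h' : G'.Adj u v := by simpa using huv
        rcases hedge h' with hG | ⟨rfl, rfl⟩ | ⟨rfl, rfl⟩
        · by_cases huR : u ∈ R
          · have hvR : v ∈ R := (hside hG).mp huR
            simp only [hπ, dif_pos huR, dif_pos hvR]
            exact Reachable.refl _
          · have hvR : v ∉ R := fun h => huR ((hside hG).mpr h)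
            have : (G.induce (S \ R)).Adj ⟨u, hu, huR⟩ ⟨v, hv, hvR⟩ := by
              simpa using hG
            simp only [hπ, dif_neg huR, dif_neg hvR]
            exact this.reachable
        · simp only [hπ, dif_pos haR, dif_neg hbR]
          exact Reachable.refl _
        · simp only [hπ, dif_neg hbR, dif_pos haR]
          exact Reachable.refl _
      rw [connected_iff]
      refine ⟨?_, ⟨⟨b, hbSR⟩⟩⟩
      rintro ⟨p, hp, hpR⟩ ⟨q, hq, hqR⟩
      have := reach_of_map π hπadj ((hconn i₀).preconnected ⟨p, hp⟩ ⟨q, hq⟩)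
      simpa only [hπ, dif_neg hpR, dif_neg hqR] using this
    by_cases hsj : s j₀
    · -- all other branch sets inside R; shrink Bm i₀ to Bm i₀ ∩ R
      have hallR : ∀ j, j ≠ i₀ → Bm j ⊆ R := by
        intro j hj; exact (hallside j j₀ hj hj₀ne).mpr hsj
      refine ⟨fun j => if j = i₀ then Bm i₀ ∩ R else Bm j, ?_, ?_, ?_⟩
      · intro j
        by_cases hj : j = i₀
        · rw [show ((fun j => if j = i₀ then Bm i₀ ∩ R else Bm j) j : Set V)
              = Bm i₀ ∩ R by simp [hj]]
          exact hconnIR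
        · rw [show ((fun j => if j = i₀ then Bm i₀ ∩ R else Bm j) j : Set V)
              = Bm j by simp [hj]]
          exact (hdichoj j hj).1
      · intro j k hjk
        by_cases hj : j = i₀ <;> by_cases hk : k = i₀
        · exact absurd (hj.trans hk.symm) hjk
        · simp only [if_pos hj, if_neg hk]
          exact Set.disjoint_of_subset_left Set.inter_subset_left (hdisj (hj ▸ hjk))
        · simp only [if_neg hj, if_pos hk]
          exact Set.disjoint_of_subset_right Set.inter_subset_left (hdisj (hk ▸ hjk))
        · simp only [if_neg hj, if_neg hk]
          exact hdisj hjk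
      · intro p q hpq
        obtain ⟨u, hu, v, hv, huv⟩ := hcrossG hpq
        by_cases hp : p = i₀ <;> by_cases hq : q = i₀
        · exact absurd (hp.trans hq.symm) (H.ne_of_adj hpq)
        · have hvR : v ∈ R := hallR q hq hv
          have huR : u ∈ R := (hside huv).mpr hvR
          simp only [if_pos hp, if_neg hq]
          exact ⟨u, ⟨hp ▸ hu, huR⟩, v, hv, huv⟩
        · have huR : u ∈ R := hallR p hp hu
          simp only [if_neg hp, if_pos hq]
          exact ⟨u, hu, v, ⟨hq ▸ hv, (hside huv).mp huR⟩, huv⟩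
        · simp only [if_neg hp, if_neg hq]
          exact ⟨u, hu, v, hv, huv⟩
    · -- all other branch sets outside R; shrink Bm i₀ to Bm i₀ \ R
      have hallR : ∀ j, j ≠ i₀ → ∀ v ∈ Bm j, v ∉ R := by
        intro j hj
        have hns : ¬ s j := fun h => hsj ((hallside j j₀ hj hj₀ne).mp h)
        rcases (hdichoj j hj).2 with h1 | h1
        · exact absurd h1 hns
        · exact h1
      refine ⟨fun j => if j = i₀ then Bm i₀ \ R else Bm j, ?_, ?_, ?_⟩
      · intro j
        by_cases hj : j = i₀
        · rw [show ((fun j => if j = i₀ then Bm i₀ \ R else Bm j) j : Set V)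
              = Bm i₀ \ R by simp [hj]]
          exact hconnDR
        · rw [show ((fun j => if j = i₀ then Bm i₀ \ R else Bm j) j : Set V)
              = Bm j by simp [hj]]
          exact (hdichoj j hj).1
      · intro j k hjk
        by_cases hj : j = i₀ <;> by_cases hk : k = i₀
        · exact absurd (hj.trans hk.symm) hjk
        · simp only [if_pos hj, if_neg hk]
          exact Set.disjoint_of_subset_left Set.diff_subset (hdisj (hj ▸ hjk))
        · simp only [if_neg hj, if_pos hk]
          exact Set.disjoint_of_subset_right Set.diff_subset (hdisj (hk ▸ hjk))
        · simp only [if_neg hj, if_neg hk]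
          exact hdisj hjk
      · intro p q hpq
        obtain ⟨u, hu, v, hv, huv⟩ := hcrossG hpq
        by_cases hp : p = i₀ <;> by_cases hq : q = i₀
        · exact absurd (hp.trans hq.symm) (H.ne_of_adj hpq)
        · have hvR : v ∉ R := hallR q hq v hv
          have huR : u ∉ R := fun h => hvR ((hside huv).mp h)
          simp only [if_pos hp, if_neg hq]
          exact ⟨u, ⟨hp ▸ hu, huR⟩, v, hv, huv⟩
        · have huR : u ∉ R := hallR p hp u hu
          have hvR : v ∉ R := fun h => huR ((hside huv).mpr h)
          simp only [if_neg hp, if_pos hq]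
          exact ⟨u, hu, v, ⟨hq ▸ hv, hvR⟩, huv⟩
        · simp only [if_neg hp, if_neg hq]
          exact ⟨u, hu, v, hv, huv⟩
  · -- no branch set contains both a and b
    push_neg at hcase
    have hdichoj : ∀ j, (G.induce (Bm j)).Connected ∧ (Bm j ⊆ R ∨ ∀ v ∈ Bm j, v ∉ R) := by
      intro j
      refine dicho _ (hconn j) ?_
      by_cases h : a ∈ Bm j
      · exact Or.inr (hcase j h)
      · exact Or.inl h
    set s : W → Prop := fun j => Bm j ⊆ R with hs
    have hsiff : ∀ j, ∀ u ∈ Bm j, (s j ↔ u ∈ R) := by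
      intro j u hu
      constructor
      · intro h; exact h hu
      · intro h
        rcases (hdichoj j).2 with h1 | h1
        · exact h1
        · exact absurd h (h1 u hu)
    have hcrossG : ∀ ⦃p q⦄, H.Adj p q → ∃ u ∈ Bm p, ∃ v ∈ Bm q, G.Adj u v := by
      intro p q hpq
      obtain ⟨u, hu, v, hv, huv⟩ := hcross hpq
      rcases hedge huv with hG | ⟨hua, hvb⟩ | ⟨hub, hva⟩
      · exact ⟨u, hu, v, hv, hG⟩
      all_goals exfalso
      · -- a ∈ Bm p, b ∈ Bm q
        have hu' : a ∈ Bm p := hua ▸ hu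
        have hv' : b ∈ Bm q := hvb ▸ hv
        have hsp : s p := (hsiff p a hu').mpr haR
        have hsq : ¬ s q := fun h => hbR (h hv')
        have hinv : ∀ p' q', H.Adj p' q' → ¬((p' = p ∧ q' = q) ∨ (p' = q ∧ q' = p)) →
            (s p' ↔ s q') := by
          intro p' q' hpq' hne
          obtain ⟨u2, hu2, v2, hv2, huv2⟩ := hcross hpq'
          rcases hedge huv2 with hG2 | ⟨hu2a, hv2b⟩ | ⟨hu2b, hv2a⟩
          · rw [hsiff p' u2 hu2, hsiff q' v2 hv2]; exact hside hG2
          · exfalso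
            apply hne; left
            constructor
            · by_contra h; exact (hdisj h).ne_of_mem (hu2a ▸ hu2) hu' rfl
            · by_contra h; exact (hdisj h).ne_of_mem (hv2b ▸ hv2) hv' rfl
          · exfalso
            apply hne; right
            constructor
            · by_contra h; exact (hdisj h).ne_of_mem (hu2b ▸ hu2) hv' rfl
            · by_contra h; exact (hdisj h).ne_of_mem (hv2a ▸ hv2) hu' rfl
        exact hsq ((hH2 p q hpq s hinv).mp hsp)
      · -- b ∈ Bm p, a ∈ Bm q
        have hu' : b ∈ Bm p := hub ▸ hu
        have hv' : a ∈ Bm q := hva ▸ hv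
        have hsq : s q := (hsiff q a hv').mpr haR
        have hsp : ¬ s p := fun h => hbR (h hu')
        have hinv : ∀ p' q', H.Adj p' q' → ¬((p' = p ∧ q' = q) ∨ (p' = q ∧ q' = p)) →
            (s p' ↔ s q') := by
          intro p' q' hpq' hne
          obtain ⟨u2, hu2, v2, hv2, huv2⟩ := hcross hpq'
          rcases hedge huv2 with hG2 | ⟨hu2a, hv2b⟩ | ⟨hu2b, hv2a⟩
          · rw [hsiff p' u2 hu2, hsiff q' v2 hv2]; exact hside hG2
          · exfalso
            apply hne; right
            constructor
            · by_contra h; exact (hdisj h).ne_of_mem (hu2a ▸ hu2) hv' rfl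
            · by_contra h; exact (hdisj h).ne_of_mem (hv2b ▸ hv2) hu' rfl
          · exfalso
            apply hne; left
            constructor
            · by_contra h; exact (hdisj h).ne_of_mem (hu2b ▸ hu2) hu' rfl
            · by_contra h; exact (hdisj h).ne_of_mem (hv2a ▸ hv2) hv' rfl
        exact hsp ((hH2 p q hpq s hinv).mpr hsq)
    exact ⟨Bm, fun j => (hdichoj j).1, hdisj, hcrossG⟩

end Transfer
section ConnLemmas
variable {V : Type*}

lemma hH2_K4 : ∀ i j : Fin 4, (completeGraph (Fin 4)).Adj i j → ∀ s : Fin 4 → Prop,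
    (∀ p q, (completeGraph (Fin 4)).Adj p q → ¬((p = i ∧ q = j) ∨ (p = j ∧ q = i)) →
      (s p ↔ s q)) → (s i ↔ s j) := by
  have hkex : ∀ i j : Fin 4, ∃ k : Fin 4, k ≠ i ∧ k ≠ j := by decide
  intro i j hij s hinv
  have hne : i ≠ j := by simpa [completeGraph] using hij
  obtain ⟨k, hki, hkj⟩ := hkex i j
  have h1 : s i ↔ s k := hinv i k (by simpa [completeGraph] using (Ne.symm hki)) (by
    rintro (⟨-, rfl⟩ | ⟨rfl, -⟩)
    · exact hkj rfl
    · exact hne rfl)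
  have h2 : s k ↔ s j := hinv k j (by simpa [completeGraph] using hkj) (by
    rintro (⟨rfl, -⟩ | ⟨rfl, -⟩)
    · exact hki rfl
    · exact hkj rfl)
  exact h1.trans h2

lemma hH3_K4 : ∀ i₀ : Fin 4, ∀ s : Fin 4 → Prop,
    (∀ p q, (completeGraph (Fin 4)).Adj p q → p ≠ i₀ → q ≠ i₀ → (s p ↔ s q)) →
    ∀ p q, p ≠ i₀ → q ≠ i₀ → (s p ↔ s q) := by
  intro i₀ s hinv p q hp hq
  by_cases hpq : p = q
  · rw [hpq]
  · exact hinv p q (by simpa [completeGraph] using hpq) hp hq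

lemma hH4_K4 : ∀ i : Fin 4, ∃ j, (completeGraph (Fin 4)).Adj i j := by
  intro i
  obtain ⟨j, hj⟩ := (show ∀ i : Fin 4, ∃ j : Fin 4, j ≠ i by decide) i
  exact ⟨j, by simpa [completeGraph] using (Ne.symm hj)⟩

lemma hH2_K23 : ∀ i j : Fin 2 ⊕ Fin 3, (completeBipartiteGraph (Fin 2) (Fin 3)).Adj i j → ∀ s : Fin 2 ⊕ Fin 3 → Prop,
    (∀ p q, (completeBipartiteGraph (Fin 2) (Fin 3)).Adj p q → ¬((p = i ∧ q = j) ∨ (p = j ∧ q = i)) → (s p ↔ s q)) →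
    (s i ↔ s j) := by
  have main : ∀ (il : Fin 2) (jr : Fin 3) (s : Fin 2 ⊕ Fin 3 → Prop),
      (∀ p q, (completeBipartiteGraph (Fin 2) (Fin 3)).Adj p q →
        ¬((p = Sum.inl il ∧ q = Sum.inr jr) ∨ (p = Sum.inr jr ∧ q = Sum.inl il)) →
        (s p ↔ s q)) → (s (Sum.inl il) ↔ s (Sum.inr jr)) := by
    intro il jr s hinv
    have h2ex : ∀ il : Fin 2, ∃ il' : Fin 2, il' ≠ il := by decide
    have h3ex : ∀ jr : Fin 3, ∃ jr' : Fin 3, jr' ≠ jr := by decide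
    obtain ⟨il', hil⟩ := h2ex il
    obtain ⟨jr', hjr⟩ := h3ex jr
    have h1 : s (Sum.inl il) ↔ s (Sum.inr jr') := by
      refine hinv _ _ (by simp) ?_
      rintro (⟨-, h⟩ | ⟨h, -⟩)
      · exact hjr (by simpa using h)
      · simp at h
    have h2 : s (Sum.inr jr') ↔ s (Sum.inl il') := by
      refine hinv _ _ (by simp) ?_
      rintro (⟨h, -⟩ | ⟨h2a, h⟩)
      · simp at h
      · exact hjr (by simpa using h2a)
    have h3 : s (Sum.inl il') ↔ s (Sum.inr jr) := by
      refine hinv _ _ (by simp) ?_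
      rintro (⟨h, -⟩ | ⟨h, -⟩)
      · exact hil (by simpa using h)
      · simp at h
    exact (h1.trans h2).trans h3
  rintro (il | ir) (jl | jr) hij s hinv
  · simp at hij
  · exact main il jr s hinv
  · have := main jl ir s (fun p q hpq hne => hinv p q hpq (by tauto))
    exact this.symm
  · simp at hij

lemma hH3_K23 : ∀ i₀ : Fin 2 ⊕ Fin 3, ∀ s : Fin 2 ⊕ Fin 3 → Prop,
    (∀ p q, (completeBipartiteGraph (Fin 2) (Fin 3)).Adj p q → p ≠ i₀ → q ≠ i₀ → (s p ↔ s q)) →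
    ∀ p q, p ≠ i₀ → q ≠ i₀ → (s p ↔ s q) := by
  intro i₀ s hinv p q hp hq
  by_cases hpq : p = q
  · rw [hpq]
  rcases p with pl | pr <;> rcases q with ql | qr
  · -- both left
    obtain ⟨m, hm⟩ : ∃ m : Fin 3, Sum.inr m ≠ i₀ := by
      rcases i₀ with l | r
      · exact ⟨0, by simp⟩
      · obtain ⟨m, hm⟩ := (show ∀ r : Fin 3, ∃ m : Fin 3, m ≠ r by decide) r
        exact ⟨m, by simpa using hm⟩
    exact (hinv _ _ (by simp) hp hm).trans (hinv _ _ (by simp) hm hq).symm.symm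
  · exact hinv _ _ (by simp) hp hq
  · exact (hinv _ _ (by simp) hq hp).symm
  · -- both right
    obtain ⟨m, hm⟩ : ∃ m : Fin 2, Sum.inl m ≠ i₀ := by
      rcases i₀ with l | r
      · obtain ⟨m, hm⟩ := (show ∀ l : Fin 2, ∃ m : Fin 2, m ≠ l by decide) l
        exact ⟨m, by simpa using hm⟩
      · exact ⟨0, by simp⟩
    exact ((hinv _ _ (by simp) hm hp).symm.trans (hinv _ _ (by simp) hm hq))

lemma hH4_K23 : ∀ i : Fin 2 ⊕ Fin 3, ∃ j, (completeBipartiteGraph (Fin 2) (Fin 3)).Adj i j := by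
  rintro (l | r)
  · exact ⟨Sum.inr 0, by simp⟩
  · exact ⟨Sum.inl 0, by simp⟩

/-- In a maximal outerplanar graph (with at least one vertex `x`), every vertex is
reachable from every other vertex. -/
lemma preconnected_of_maximalOuterplanar {G : SimpleGraph V}
    (hmax : MaximalOuterplanar G) : G.Preconnected := by
  have key : ∀ p q : V, ¬ G.Reachable p q → False := by
    intro p q hnr
    have hne : p ≠ q := by rintro rfl; exact hnr (Reachable.refl _)
    have hnadj : ¬ G.Adj p q := fun h => hnr h.reachable
    have hno := hmax.2 p q hne hnadj
    rw [Outerplanar, not_and_or, not_not, not_not] at hno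
    rcases hno with h4 | h23
    · exact hmax.1.1 (minor_transfer hnr hH2_K4 hH3_K4 hH4_K4 h4)
    · exact hmax.1.2 (minor_transfer hnr hH2_K23 hH3_K23 hH4_K23 h23)
  intro p q
  by_contra h
  exact key p q h

end ConnLemmas
/-- interior edge `xy` with common neighbors `w ≠ z`, where
`δ_xw = 1`, `δ_xz = 1`, `δ_yw = 1`, `δ_yz = 1`. -/
theorem interior_config_16 {V : Type*} [Fintype V]
    (G : SimpleGraph V) [DecidableRel G.Adj]
    (hmax : MaximalOuterplanar G)
    (x y w z : V) (hxy : G.Adj x y) (hd : G.degree x ≤ G.degree y)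
    (hwz : w ≠ z)
    (hcom : G.neighborSet x ∩ G.neighborSet y = {w, z})
    (hxw : ((G.neighborSet x ∩ G.neighborSet w) \ {y}).ncard = 1)
    (hxz : ((G.neighborSet x ∩ G.neighborSet z) \ {y}).ncard = 1)
    (hyw : ((G.neighborSet y ∩ G.neighborSet w) \ {x}).ncard = 1)
    (hyz : ((G.neighborSet y ∩ G.neighborSet z) \ {x}).ncard = 1) :
    llyCurv G x y = 4 / (G.degree x : ℝ) + 8 / (G.degree y : ℝ) - 2 := by
  classical
  -- ## basic adjacencies
  have hwmem : w ∈ G.neighborSet x ∩ G.neighborSet y := by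
    rw [hcom]; exact Set.mem_insert _ _
  have hzmem : z ∈ G.neighborSet x ∩ G.neighborSet y := by
    rw [hcom]; exact Set.mem_insert_iff.mpr (Or.inr rfl)
  have hxw' : G.Adj x w := hwmem.1
  have hyw' : G.Adj y w := hwmem.2
  have hxz' : G.Adj x z := hzmem.1
  have hyz' : G.Adj y z := hzmem.2
  have hcommem : ∀ u, G.Adj x u → G.Adj y u → u = w ∨ u = z := by
    intro u h1 h2
    have : u ∈ G.neighborSet x ∩ G.neighborSet y := ⟨h1, h2⟩
    rw [hcom] at this
    simpa using this
  -- ## connectivity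
  have hpre : G.Preconnected := preconnected_of_maximalOuterplanar hmax
  have hGc : G.Connected := (connected_iff G).mpr ⟨hpre, ⟨x⟩⟩
  -- ## w and z are not adjacent
  have hwznadj : ¬ G.Adj w z := by
    intro h
    exact hmax.1.1 (isMinorOf_K4 hxy hxw' hxz' hyw' hyz' h)
  -- ## the four special vertices a, b, c, e
  obtain ⟨a, ha⟩ := Set.ncard_eq_one.mp hxw
  have hamem : a ∈ (G.neighborSet x ∩ G.neighborSet w) \ {y} := by rw [ha]; rfl
  have hax : G.Adj x a := hamem.1.1
  have haw : G.Adj w a := hamem.1.2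
  have hay : a ≠ y := hamem.2
  have ua : ∀ u, G.Adj x u → G.Adj w u → u ≠ y → u = a := by
    intro u h1 h2 h3
    have : u ∈ (G.neighborSet x ∩ G.neighborSet w) \ {y} := ⟨⟨h1, h2⟩, h3⟩
    rw [ha] at this; simpa using this
  obtain ⟨b, hb⟩ := Set.ncard_eq_one.mp hxz
  have hbmem : b ∈ (G.neighborSet x ∩ G.neighborSet z) \ {y} := by rw [hb]; rfl
  have hbx : G.Adj x b := hbmem.1.1
  have hbz : G.Adj z b := hbmem.1.2
  have hby : b ≠ y := hbmem.2
  have ub : ∀ u, G.Adj x u → G.Adj z u → u ≠ y → u = b := by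
    intro u h1 h2 h3
    have : u ∈ (G.neighborSet x ∩ G.neighborSet z) \ {y} := ⟨⟨h1, h2⟩, h3⟩
    rw [hb] at this; simpa using this
  obtain ⟨c, hc⟩ := Set.ncard_eq_one.mp hyw
  have hcmem : c ∈ (G.neighborSet y ∩ G.neighborSet w) \ {x} := by rw [hc]; rfl
  have hcy : G.Adj y c := hcmem.1.1
  have hcw : G.Adj w c := hcmem.1.2
  have hcx : c ≠ x := hcmem.2
  have uc : ∀ u, G.Adj y u → G.Adj w u → u ≠ x → u = c := by
    intro u h1 h2 h3
    have : u ∈ (G.neighborSet y ∩ G.neighborSet w) \ {x} := ⟨⟨h1, h2⟩, h3⟩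
    rw [hc] at this; simpa using this
  obtain ⟨e, he⟩ := Set.ncard_eq_one.mp hyz
  have hey : G.Adj y e := by
    have : e ∈ (G.neighborSet y ∩ G.neighborSet z) \ {x} := by rw [he]; rfl
    exact this.1.1
  have hez : G.Adj z e := by
    have : e ∈ (G.neighborSet y ∩ G.neighborSet z) \ {x} := by rw [he]; rfl
    exact this.1.2
  have hex : e ≠ x := by
    have : e ∈ (G.neighborSet y ∩ G.neighborSet z) \ {x} := by rw [he]; rfl
    exact this.2
  have ue : ∀ u, G.Adj y u → G.Adj z u → u ≠ x → u = e := by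
    intro u h1 h2 h3
    have : u ∈ (G.neighborSet y ∩ G.neighborSet z) \ {x} := ⟨⟨h1, h2⟩, h3⟩
    rw [he] at this; simpa using this
  -- ## distinctness facts
  have haz : a ≠ z := by rintro rfl; exact hwznadj haw
  have haw' : a ≠ w := haw.ne'
  have hbw : b ≠ w := by rintro rfl; exact hwznadj hbz.symm
  have hbz' : b ≠ z := hbz.ne'
  have hcz : c ≠ z := by rintro rfl; exact hwznadj hcw
  have hcw' : c ≠ w := hcw.ne'
  have hcyne : c ≠ y := hcy.ne'
  have hew : e ≠ w := by rintro rfl; exact hwznadj hez.symm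
  have hez' : e ≠ z := hez.ne'
  have heyne : e ≠ y := hey.ne'
  have hwx : w ≠ x := hxw'.ne'
  have hwy : w ≠ y := hyw'.ne'
  have hzx : z ≠ x := hxz'.ne'
  have hzy : z ≠ y := hyz'.ne'
  -- a ≠ b via a K23 minor
  have hab : a ≠ b := by
    intro hab
    apply hmax.1.2
    exact isMinorOf_K23 (p1 := w) (p2 := z) (q1 := x) (q2 := y) {a}
      (connected_induce_of_hub _ a rfl (fun v hv => Or.inl hv))
      hwz hxy.ne
      (by simpa using haw'.symm) (by simpa using haz.symm)
      (by simpa using hax.ne) (by simpa using hay.symm)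
      hxw'.symm hyw'.symm hxz'.symm hyz'.symm
      rfl haw rfl (show G.Adj z a by rw [hab]; exact hbz)
  -- c ≠ e via a K23 minor
  have hce : c ≠ e := by
    intro hce
    apply hmax.1.2
    exact isMinorOf_K23 (p1 := w) (p2 := z) (q1 := x) (q2 := y) {c}
      (connected_induce_of_hub _ c rfl (fun v hv => Or.inl hv))
      hwz hxy.ne
      (by simpa using hcw'.symm) (by simpa using hcz.symm)
      (by simpa using hcx.symm) (by simpa using hcyne.symm)
      hxw'.symm hyw'.symm hxz'.symm hyz'.symm
      rfl hcw rfl (show G.Adj z c by rw [hce]; exact hez)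
  -- ## the key structural lemmas about neighbors of x and neighbors of y
  have key_ne : ∀ u v : V, G.Adj x u → G.Adj y v → u ≠ y → u ≠ w → u ≠ z →
      v ≠ x → v ≠ w → v ≠ z → u ≠ v := by
    intro u v hxu hyv huy huw huz hvx hvw hvz
    rintro rfl
    rcases hcommem u hxu hyv with rfl | rfl
    · exact huw rfl
    · exact huz rfl
  have key_nadj : ∀ u v : V, G.Adj x u → G.Adj y v → u ≠ y → u ≠ w → u ≠ z →
      v ≠ x → v ≠ w → v ≠ z → ¬ G.Adj u v := by
    intro u v hxu hyv huy huw huz hvx hvw hvz hadj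
    have huv : u ≠ v := key_ne u v hxu hyv huy huw huz hvx hvw hvz
    apply hmax.1.2
    refine isMinorOf_K23 (p1 := x) (p2 := y) (q1 := w) (q2 := z) {u, v}
      (connected_induce_of_hub _ v (Set.mem_insert_iff.mpr (Or.inr rfl))
        ?_)
      hxy.ne hwz ?_ ?_ ?_ ?_ hxw' hxz' hyw' hyz'
      (Set.mem_insert _ _) hxu (Set.mem_insert_iff.mpr (Or.inr rfl)) hyv
    · rintro t (rfl | rfl)
      · exact Or.inr hadj
      · exact Or.inl rfl
    · simp only [Set.mem_insert_iff, Set.mem_singleton_iff]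
      push_neg
      exact ⟨hxu.ne, Ne.symm hvx⟩
    · simp only [Set.mem_insert_iff, Set.mem_singleton_iff]
      push_neg
      exact ⟨Ne.symm huy, hyv.ne⟩
    · simp only [Set.mem_insert_iff, Set.mem_singleton_iff]
      push_neg
      exact ⟨Ne.symm huw, Ne.symm hvw⟩
    · simp only [Set.mem_insert_iff, Set.mem_singleton_iff]
      push_neg
      exact ⟨Ne.symm huz, Ne.symm hvz⟩
  have key_mid : ∀ u v m : V, G.Adj x u → G.Adj y v → u ≠ y → u ≠ w → u ≠ z →
      v ≠ x → v ≠ w → v ≠ z → G.Adj u m → G.Adj m v → m = w ∨ m = z := by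
    intro u v m hxu hyv huy huw huz hvx hvw hvz hum hmv
    by_contra hn
    push_neg at hn
    obtain ⟨hmw, hmz⟩ := hn
    have hmx : m ≠ x := by
      rintro rfl
      rcases hcommem v hmv hyv with rfl | rfl
      · exact hvw rfl
      · exact hvz rfl
    have hmy : m ≠ y := by
      rintro rfl
      rcases hcommem u hxu hum.symm with rfl | rfl
      · exact huw rfl
      · exact huz rfl
    apply hmax.1.2
    refine isMinorOf_K23 (p1 := x) (p2 := y) (q1 := w) (q2 := z) {u, m, v}
      (connected_induce_of_hub _ m
        (Set.mem_insert_iff.mpr (Or.inr (Set.mem_insert _ _))) ?_)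
      hxy.ne hwz ?_ ?_ ?_ ?_ hxw' hxz' hyw' hyz'
      (Set.mem_insert _ _) hxu
      (Set.mem_insert_iff.mpr (Or.inr (Set.mem_insert_iff.mpr (Or.inr rfl)))) hyv
    · rintro t (rfl | rfl | rfl)
      · exact Or.inr hum
      · exact Or.inl rfl
      · exact Or.inr hmv.symm
    · simp only [Set.mem_insert_iff, Set.mem_singleton_iff]
      push_neg
      exact ⟨hxu.ne, Ne.symm hmx, Ne.symm hvx⟩
    · simp only [Set.mem_insert_iff, Set.mem_singleton_iff]
      push_neg
      exact ⟨Ne.symm huy, Ne.symm hmy, hyv.ne⟩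
    · simp only [Set.mem_insert_iff, Set.mem_singleton_iff]
      push_neg
      exact ⟨Ne.symm huw, Ne.symm hmw, Ne.symm hvw⟩
    · simp only [Set.mem_insert_iff, Set.mem_singleton_iff]
      push_neg
      exact ⟨Ne.symm huz, Ne.symm hmz, Ne.symm hvz⟩
  -- ## distance helpers
  have dadj : ∀ {u v : V}, G.Adj u v → G.dist u v = 1 := fun h => dist_eq_one_iff_adj.mpr h
  have dge1 : ∀ {u v : V}, u ≠ v → 1 ≤ G.dist u v := by
    intro u v hne
    have h1 : G.dist u v ≠ 0 := by
      rw [dist_ne_zero_iff_ne_and_reachable]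
      exact ⟨hne, hpre u v⟩
    omega
  have dge2 : ∀ {u v : V}, u ≠ v → ¬ G.Adj u v → 2 ≤ G.dist u v := by
    intro u v hne hnadj
    have h1 := dge1 hne
    have h2 : G.dist u v ≠ 1 := fun h => hnadj (dist_eq_one_iff_adj.mp h)
    omega
  have dge3 : ∀ {u v : V}, u ≠ v → ¬ G.Adj u v →
      (∀ m, G.Adj u m → G.Adj m v → False) → 3 ≤ G.dist u v := by
    intro u v hne hnadj hmid
    have h2 := dge2 hne hnadj
    rcases Nat.lt_or_ge (G.dist u v) 3 with h | h
    · exfalso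
      have hd2 : G.dist u v = 2 := by omega
      obtain ⟨p, hp⟩ := (hpre u v).exists_walk_length_eq_dist
      rw [hd2] at hp
      cases p with
      | nil => simp at hp
      | cons h1 q =>
        cases q with
        | nil => simp at hp
        | cons h2' q2 =>
          cases q2 with
          | nil => exact hmid _ h1 h2'
          | cons h3 q3 => simp [SimpleGraph.Walk.length_cons] at hp
    · exact h
  -- ## the optimal function f
  set T : Finset V := G.neighborFinset y \ {x, w, z, c, e} with hT
  have tmem : ∀ t ∈ T, G.Adj y t ∧ t ≠ x ∧ t ≠ w ∧ t ≠ z ∧ t ≠ c ∧ t ≠ e := by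
    intro t ht
    rw [hT, Finset.mem_sdiff, mem_neighborFinset] at ht
    refine ⟨ht.1, ?_⟩
    have := ht.2
    simp only [Finset.mem_insert, Finset.mem_singleton] at this
    push_neg at this
    exact this
  set f : V → ℤ := fun u =>
    max (max (1 - (G.dist u y : ℤ)) (max (1 - (G.dist u c : ℤ)) (1 - (G.dist u e : ℤ))))
        (T.fold max (-1) (fun t => 2 - (G.dist u t : ℤ))) with hf
  have fge1 : ∀ u, 1 - (G.dist u y : ℤ) ≤ f u :=
    fun u => le_trans (le_max_left _ _) (le_max_left _ _)
  have fgec : ∀ u, 1 - (G.dist u c : ℤ) ≤ f u :=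
    fun u => le_trans (le_trans (le_max_left _ _) (le_max_right _ _)) (le_max_left _ _)
  have fgee : ∀ u, 1 - (G.dist u e : ℤ) ≤ f u :=
    fun u => le_trans (le_trans (le_max_right _ _) (le_max_right _ _)) (le_max_left _ _)
  have fgeT : ∀ u t, t ∈ T → 2 - (G.dist u t : ℤ) ≤ f u :=
    fun u t ht => le_trans ((Finset.le_fold_max _).mpr (Or.inr ⟨t, ht, le_rfl⟩))
      (le_max_right _ _)
  have fgem1 : ∀ u, -1 ≤ f u :=
    fun u => le_trans ((Finset.le_fold_max _).mpr (Or.inl le_rfl)) (le_max_right _ _)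
  have fval_le : ∀ (u : V) (k : ℤ), 1 - (G.dist u y : ℤ) ≤ k → 1 - (G.dist u c : ℤ) ≤ k →
      1 - (G.dist u e : ℤ) ≤ k → -1 ≤ k → (∀ t ∈ T, 2 - (G.dist u t : ℤ) ≤ k) →
      f u ≤ k := by
    intro u k h1 h2 h3 h4 h5
    rw [hf]
    refine max_le (max_le h1 (max_le h2 h3)) ?_
    exact (Finset.fold_max_le k).mpr ⟨h4, h5⟩
  -- values of f
  have hfx : f x = 0 := by
    apply le_antisymm
    · refine fval_le x 0 ?_ ?_ ?_ (by norm_num) ?_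
      · rw [dadj hxy]; norm_num
      · have := dge1 (Ne.symm hcx); omega
      · have := dge1 (Ne.symm hex); omega
      · intro t ht
        obtain ⟨hyt, htx, htw, htz, -, -⟩ := tmem t ht
        have hnadj : ¬ G.Adj x t := by
          intro hadj
          rcases hcommem t hadj hyt with rfl | rfl
          · exact htw rfl
          · exact htz rfl
        have := dge2 (Ne.symm htx) hnadj
        omega
    · have h := fge1 x
      rw [dadj hxy] at h
      simpa using h
  have hfy : f y = 1 := by
    apply le_antisymm
    · refine fval_le y 1 ?_ ?_ ?_ (by norm_num) ?_
      · simp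
      · simp
      · simp
      · intro t ht
        obtain ⟨hyt, -⟩ := tmem t ht
        have := dge1 hyt.ne
        omega
    · have h := fge1 y
      rw [SimpleGraph.dist_self] at h
      simpa using h
  have hfw : f w = 0 := by
    apply le_antisymm
    · refine fval_le w 0 ?_ ?_ ?_ (by norm_num) ?_
      · rw [dadj hyw'.symm]; norm_num
      · have := dge1 hcw'.symm; omega
      · have := dge1 (Ne.symm hew); omega
      · intro t ht
        obtain ⟨hyt, htx, htw, htz, htc, -⟩ := tmem t ht
        have hnadj : ¬ G.Adj w t := by
          intro hadj
          exact htc (uc t hyt hadj htx)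
        have := dge2 (Ne.symm htw) hnadj
        omega
    · have h := fge1 w
      rw [dadj hyw'.symm] at h
      simpa using h
  have hfz : f z = 0 := by
    apply le_antisymm
    · refine fval_le z 0 ?_ ?_ ?_ (by norm_num) ?_
      · rw [dadj hyz'.symm]; norm_num
      · have := dge1 (Ne.symm hcz); omega
      · have := dge1 hez'.symm; omega
      · intro t ht
        obtain ⟨hyt, htx, htw, htz, -, hte⟩ := tmem t ht
        have hnadj : ¬ G.Adj z t := by
          intro hadj
          exact hte (ue t hyt hadj htx)
        have := dge2 (Ne.symm htz) hnadj
        omega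
    · have h := fge1 z
      rw [dadj hyz'.symm] at h
      simpa using h
  have hfc : f c = 1 := by
    apply le_antisymm
    · refine fval_le c 1 ?_ ?_ ?_ (by norm_num) ?_
      · simp
      · simp
      · simp
      · intro t ht
        obtain ⟨-, -, -, -, htc, -⟩ := tmem t ht
        have := dge1 (Ne.symm htc)
        omega
    · have h := fgec c
      rw [SimpleGraph.dist_self] at h
      simpa using h
  have hfe : f e = 1 := by
    apply le_antisymm
    · refine fval_le e 1 ?_ ?_ ?_ (by norm_num) ?_
      · simp
      · simp
      · simp
      · intro t ht
        obtain ⟨-, -, -, -, -, hte⟩ := tmem t ht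
        have := dge1 (Ne.symm hte)
        omega
    · have h := fgee e
      rw [SimpleGraph.dist_self] at h
      simpa using h
  have hft : ∀ t ∈ T, f t = 2 := by
    intro t ht
    apply le_antisymm
    · refine fval_le t 2 ?_ ?_ ?_ (by norm_num) ?_
      · omega
      · omega
      · omega
      · intro t' ht'
        omega
    · have h := fgeT t t ht
      rw [SimpleGraph.dist_self] at h
      simpa using h
  have hfnx : ∀ u, G.Adj x u → u ≠ y → u ≠ w → u ≠ z → f u = -1 := by
    intro u hxu huy huw huz
    apply le_antisymm
    · refine fval_le u (-1) ?_ ?_ ?_ le_rfl ?_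
      · have hnadj : ¬ G.Adj u y := by
          intro hadj
          rcases hcommem u hxu hadj.symm with rfl | rfl
          · exact huw rfl
          · exact huz rfl
        have := dge2 huy hnadj
        omega
      · have hne := key_ne u c hxu hcy huy huw huz hcx hcw' hcz
        have hnadj := key_nadj u c hxu hcy huy huw huz hcx hcw' hcz
        have := dge2 hne hnadj
        omega
      · have hne := key_ne u e hxu hey huy huw huz hex hew hez'
        have hnadj := key_nadj u e hxu hey huy huw huz hex hew hez'
        have := dge2 hne hnadj
        omega
      · intro t ht
        obtain ⟨hyt, htx, htw, htz, htc, hte⟩ := tmem t ht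
        have hne := key_ne u t hxu hyt huy huw huz htx htw htz
        have hnadj := key_nadj u t hxu hyt huy huw huz htx htw htz
        have hmid : ∀ m, G.Adj u m → G.Adj m t → False := by
          intro m hum hmt
          rcases key_mid u t m hxu hyt huy huw huz htx htw htz hum hmt with rfl | rfl
          · exact htc (uc t hyt hmt htx)
          · exact hte (ue t hyt hmt htx)
        have := dge3 hne hnadj hmid
        omega
    · exact fgem1 u
  -- ## f is 1-Lipschitz
  have hLipHalf : ∀ u v : V, f u - f v ≤ (G.dist u v : ℤ) := by
    intro u v
    rw [sub_le_iff_le_add]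
    have tri : ∀ (α : V) (hwt : ℤ), hwt - (G.dist v α : ℤ) ≤ f v →
        hwt - (G.dist u α : ℤ) ≤ (G.dist u v : ℤ) + f v := by
      intro α hwt hle
      have t1 : G.dist v α ≤ G.dist v u + G.dist u α := hGc.dist_triangle
      have t2 : G.dist v u = G.dist u v := SimpleGraph.dist_comm
      rw [t2] at t1
      have t3 : (G.dist v α : ℤ) ≤ (G.dist u v : ℤ) + (G.dist u α : ℤ) := by exact_mod_cast t1
      omega
    refine fval_le u _ (tri y 1 (fge1 v)) (tri c 1 (fgec v)) (tri e 1 (fgee v)) ?_ ?_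
    · have h1 := fgem1 v
      have hd0 : (0:ℤ) ≤ (G.dist u v : ℤ) := Int.natCast_nonneg _
      omega
    · intro t ht
      exact tri t 2 (fgeT v t ht)
  have hLip : ∀ u v : V, |f u - f v| ≤ (G.dist u v : ℤ) := by
    intro u v
    rw [abs_sub_le_iff]
    refine ⟨hLipHalf u v, ?_⟩
    have h2 := hLipHalf v u
    rwa [SimpleGraph.dist_comm] at h2
  -- ## degrees
  have hdxpos : 0 < G.degree x := (G.degree_pos_iff_exists_adj x).mpr ⟨y, hxy⟩
  have hdypos : 0 < G.degree y := (G.degree_pos_iff_exists_adj y).mpr ⟨x, hxy.symm⟩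
  have hD1 : (0:ℝ) < (G.degree x : ℝ) := by exact_mod_cast hdxpos
  have hD2 : (0:ℝ) < (G.degree y : ℝ) := by exact_mod_cast hdypos
  -- ## decomposition of the neighborhood of x (coarse, for the sum of f)
  set Rx : Finset V := G.neighborFinset x \ {y, w, z} with hRx
  have hNx : G.neighborFinset x = insert y (insert w (insert z Rx)) := by
    ext u
    simp only [hRx, Finset.mem_insert, Finset.mem_sdiff, mem_neighborFinset,
      Finset.mem_singleton]
    constructor
    · intro h
      by_cases h1 : u = y
      · exact Or.inl h1
      by_cases h2 : u = w
      · exact Or.inr (Or.inl h2)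
      by_cases h3 : u = z
      · exact Or.inr (Or.inr (Or.inl h3))
      · exact Or.inr (Or.inr (Or.inr ⟨h, by push_neg; exact ⟨h1, h2, h3⟩⟩))
    · rintro (rfl | rfl | rfl | ⟨h, -⟩)
      · exact hxy
      · exact hxw'
      · exact hxz'
      · exact h
  have hyni : y ∉ insert w (insert z Rx) := by
    simp only [Finset.mem_insert, hRx, Finset.mem_sdiff, Finset.mem_singleton, not_or]
    exact ⟨Ne.symm hwy, Ne.symm hzy, by simp⟩
  have hwni : w ∉ insert z Rx := by
    simp only [Finset.mem_insert, hRx, Finset.mem_sdiff, Finset.mem_singleton, not_or]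
    exact ⟨hwz, by simp⟩
  have hzni : z ∉ Rx := by simp [hRx]
  have hcardRx : Rx.card + 3 = G.degree x := by
    have h1 : G.degree x = (insert y (insert w (insert z Rx))).card := by
      rw [← hNx]; rfl
    rw [Finset.card_insert_of_notMem hyni, Finset.card_insert_of_notMem hwni,
      Finset.card_insert_of_notMem hzni] at h1
    omega
  -- ## decomposition of the neighborhood of y
  have hNy : G.neighborFinset y = insert x (insert w (insert z (insert c (insert e T)))) := by
    ext u
    simp only [hT, Finset.mem_insert, Finset.mem_sdiff, mem_neighborFinset,
      Finset.mem_singleton]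
    constructor
    · intro h
      by_cases h1 : u = x
      · exact Or.inl h1
      by_cases h2 : u = w
      · exact Or.inr (Or.inl h2)
      by_cases h3 : u = z
      · exact Or.inr (Or.inr (Or.inl h3))
      by_cases h4 : u = c
      · exact Or.inr (Or.inr (Or.inr (Or.inl h4)))
      by_cases h5 : u = e
      · exact Or.inr (Or.inr (Or.inr (Or.inr (Or.inl h5))))
      · exact Or.inr (Or.inr (Or.inr (Or.inr (Or.inr ⟨h, by push_neg; exact ⟨h1, h2, h3, h4, h5⟩⟩))))
    · rintro (rfl | rfl | rfl | rfl | rfl | ⟨h, -⟩)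
      · exact hxy.symm
      · exact hyw'
      · exact hyz'
      · exact hcy
      · exact hey
      · exact h
  have hxni2 : x ∉ insert w (insert z (insert c (insert e T))) := by
    simp only [Finset.mem_insert, hT, Finset.mem_sdiff, Finset.mem_singleton, not_or]
    exact ⟨Ne.symm hwx, Ne.symm hzx, Ne.symm hcx, Ne.symm hex, by simp⟩
  have hwni2 : w ∉ insert z (insert c (insert e T)) := by
    simp only [Finset.mem_insert, hT, Finset.mem_sdiff, Finset.mem_singleton, not_or]
    exact ⟨hwz, Ne.symm hcw', Ne.symm hew, by simp⟩
  have hzni2 : z ∉ insert c (insert e T) := by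
    simp only [Finset.mem_insert, hT, Finset.mem_sdiff, Finset.mem_singleton, not_or]
    exact ⟨Ne.symm hcz, Ne.symm hez', by simp⟩
  have hcni2 : c ∉ insert e T := by
    simp only [Finset.mem_insert, hT, Finset.mem_sdiff, Finset.mem_singleton, not_or]
    exact ⟨hce, by simp⟩
  have heni2 : e ∉ T := by simp [hT]
  have hcardT : T.card + 5 = G.degree y := by
    have h1 : G.degree y = (insert x (insert w (insert z (insert c (insert e T))))).card := by
      rw [← hNy]; rfl
    rw [Finset.card_insert_of_notMem hxni2, Finset.card_insert_of_notMem hwni2,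
      Finset.card_insert_of_notMem hzni2, Finset.card_insert_of_notMem hcni2,
      Finset.card_insert_of_notMem heni2] at h1
    omega
  -- ## the two sums for f
  have hsum_x : ∑ u ∈ G.neighborFinset x, ((f u : ℝ) - (f x : ℝ))
      = 4 - (G.degree x : ℝ) := by
    rw [hNx, Finset.sum_insert hyni, Finset.sum_insert hwni, Finset.sum_insert hzni]
    have hrest : ∀ u ∈ Rx, ((f u : ℝ) - (f x : ℝ)) = -1 := by
      intro u hu
      rw [hRx, Finset.mem_sdiff, mem_neighborFinset] at hu
      simp only [Finset.mem_insert, Finset.mem_singleton, not_or] at hu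
      obtain ⟨hadj, hne1, hne2, hne3⟩ := hu
      rw [hfnx u hadj hne1 hne2 hne3, hfx]
      norm_num
    rw [Finset.sum_congr rfl hrest, Finset.sum_const, hfy, hfw, hfz, hfx, nsmul_eq_mul]
    have hcard : (Rx.card : ℝ) = (G.degree x : ℝ) - 3 := by
      have := hcardRx
      push_cast [← this]
      ring
    rw [hcard]
    push_cast
    ring
  have hsum_y : ∑ u ∈ G.neighborFinset y, ((f u : ℝ) - (f y : ℝ))
      = (G.degree y : ℝ) - 8 := by
    rw [hNy, Finset.sum_insert hxni2, Finset.sum_insert hwni2, Finset.sum_insert hzni2,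
      Finset.sum_insert hcni2, Finset.sum_insert heni2]
    have hrest : ∀ u ∈ T, ((f u : ℝ) - (f y : ℝ)) = 1 := by
      intro u hu
      rw [hft u hu, hfy]
      norm_num
    rw [Finset.sum_congr rfl hrest, Finset.sum_const, hfx, hfw, hfz, hfc, hfe, hfy,
      nsmul_eq_mul]
    have hcard : (T.card : ℝ) = (G.degree y : ℝ) - 5 := by
      have := hcardT
      push_cast [← this]
      ring
    rw [hcard]
    push_cast
    ring
  have hval : graphLap G f x - graphLap G f y
      = 4 / (G.degree x : ℝ) + 8 / (G.degree y : ℝ) - 2 := by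
    simp only [graphLap]
    rw [hsum_x, hsum_y]
    field_simp
    ring
  -- ## lower bound for all admissible functions
  have hlow : ∀ r ∈ {r : ℝ | ∃ g : V → ℤ,
      (∀ u v : V, |g u - g v| ≤ (G.dist u v : ℤ)) ∧ g y - g x = 1 ∧
      r = graphLap G g x - graphLap G g y},
      4 / (G.degree x : ℝ) + 8 / (G.degree y : ℝ) - 2 ≤ r := by
    rintro r ⟨g, hgLip, hgyx, rfl⟩
    have hadjb : ∀ {u v : V}, G.Adj u v → g u - g v ≤ 1 ∧ g v - g u ≤ 1 := by
      intro u v h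
      have h1 := hgLip u v
      rw [dadj h] at h1
      push_cast at h1
      have h2 := abs_le.mp h1
      omega
    -- fine decomposition of the neighborhood of x
    set Rx5 : Finset V := G.neighborFinset x \ {y, w, z, a, b} with hRx5
    have hNx5 : G.neighborFinset x = insert y (insert w (insert z (insert a (insert b Rx5)))) := by
      ext u
      simp only [hRx5, Finset.mem_insert, Finset.mem_sdiff, mem_neighborFinset,
        Finset.mem_singleton]
      constructor
      · intro h
        by_cases h1 : u = y
        · exact Or.inl h1
        by_cases h2 : u = w
        · exact Or.inr (Or.inl h2)
        by_cases h3 : u = z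
        · exact Or.inr (Or.inr (Or.inl h3))
        by_cases h4 : u = a
        · exact Or.inr (Or.inr (Or.inr (Or.inl h4)))
        by_cases h5 : u = b
        · exact Or.inr (Or.inr (Or.inr (Or.inr (Or.inl h5))))
        · exact Or.inr (Or.inr (Or.inr (Or.inr (Or.inr ⟨h, by push_neg; exact ⟨h1, h2, h3, h4, h5⟩⟩))))
      · rintro (rfl | rfl | rfl | rfl | rfl | ⟨h, -⟩)
        · exact hxy
        · exact hxw'
        · exact hxz'
        · exact hax
        · exact hbx
        · exact h
    have hyni5 : y ∉ insert w (insert z (insert a (insert b Rx5))) := by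
      simp only [Finset.mem_insert, hRx5, Finset.mem_sdiff, Finset.mem_singleton, not_or]
      exact ⟨Ne.symm hwy, Ne.symm hzy, Ne.symm hay, Ne.symm hby, by simp⟩
    have hwni5 : w ∉ insert z (insert a (insert b Rx5)) := by
      simp only [Finset.mem_insert, hRx5, Finset.mem_sdiff, Finset.mem_singleton, not_or]
      exact ⟨hwz, Ne.symm haw', Ne.symm hbw, by simp⟩
    have hzni5 : z ∉ insert a (insert b Rx5) := by
      simp only [Finset.mem_insert, hRx5, Finset.mem_sdiff, Finset.mem_singleton, not_or]
      exact ⟨Ne.symm haz, Ne.symm hbz', by simp⟩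
    have hani5 : a ∉ insert b Rx5 := by
      simp only [Finset.mem_insert, hRx5, Finset.mem_sdiff, Finset.mem_singleton, not_or]
      exact ⟨hab, by simp⟩
    have hbni5 : b ∉ Rx5 := by simp [hRx5]
    have hcardRx5 : Rx5.card + 5 = G.degree x := by
      have h1 : G.degree x
          = (insert y (insert w (insert z (insert a (insert b Rx5))))).card := by
        rw [← hNx5]; rfl
      rw [Finset.card_insert_of_notMem hyni5, Finset.card_insert_of_notMem hwni5,
        Finset.card_insert_of_notMem hzni5, Finset.card_insert_of_notMem hani5,
        Finset.card_insert_of_notMem hbni5] at h1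
      omega
    -- integer sum bounds
    have hSx : 2*(g w - g x) + 2*(g z - g x) + 4 - (G.degree x : ℤ)
        ≤ ∑ u ∈ G.neighborFinset x, (g u - g x) := by
      rw [hNx5, Finset.sum_insert hyni5, Finset.sum_insert hwni5, Finset.sum_insert hzni5,
        Finset.sum_insert hani5, Finset.sum_insert hbni5]
      have hrest : ∀ u ∈ Rx5, (-1 : ℤ) ≤ g u - g x := by
        intro u hu
        rw [hRx5, Finset.mem_sdiff, mem_neighborFinset] at hu
        have := (hadjb hu.1).1
        omega
      have hsr : (-(Rx5.card : ℤ)) ≤ ∑ u ∈ Rx5, (g u - g x) := by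
        calc (-(Rx5.card : ℤ)) = ∑ _u ∈ Rx5, (-1 : ℤ) := by
              rw [Finset.sum_const]; push_cast; ring
          _ ≤ ∑ u ∈ Rx5, (g u - g x) := Finset.sum_le_sum hrest
      have hcc : (Rx5.card : ℤ) = (G.degree x : ℤ) - 5 := by
        have := hcardRx5; push_cast [← this]; ring
      have hwb := (hadjb hyw').1
      have hzb := (hadjb hyz').1
      have hab' := (hadjb haw).1
      have hbb' := (hadjb hbz).1
      -- g a ≥ g w - 1, g b ≥ g z - 1, g y - g x = 1
      rw [hcc] at hsr
      omega
    have hSy : ∑ u ∈ G.neighborFinset y, (g u - g y)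
        ≤ 2*(g w - g x) + 2*(g z - g x) - 8 + (G.degree y : ℤ) := by
      rw [hNy, Finset.sum_insert hxni2, Finset.sum_insert hwni2, Finset.sum_insert hzni2,
        Finset.sum_insert hcni2, Finset.sum_insert heni2]
      have hrest : ∀ u ∈ T, g u - g y ≤ 1 := by
        intro u hu
        exact (hadjb (tmem u hu).1).2
      have hsr : ∑ u ∈ T, (g u - g y) ≤ (T.card : ℤ) := by
        calc ∑ u ∈ T, (g u - g y) ≤ ∑ _u ∈ T, (1 : ℤ) := Finset.sum_le_sum hrest
          _ = (T.card : ℤ) := by rw [Finset.sum_const]; push_cast; ring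
      have hcc : (T.card : ℤ) = (G.degree y : ℤ) - 5 := by
        have := hcardT; push_cast [← this]; ring
      have hcb := (hadjb hcw).2  -- g c - g w ≤ 1
      have heb := (hadjb hez).2  -- g e - g z ≤ 1
      have hwb := (hadjb hxw').1
      have hzb := (hadjb hxz').1
      rw [hcc] at hsr
      omega
    have hFw0 : 0 ≤ g w - g x := by
      have := (hadjb hyw').1
      omega
    have hFz0 : 0 ≤ g z - g x := by
      have := (hadjb hyz').1
      omega
    have hdxy : (G.degree x : ℤ) ≤ (G.degree y : ℤ) := by exact_mod_cast hd
    have hdx0 : (0:ℤ) < (G.degree x : ℤ) := by exact_mod_cast hdxpos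
    have hdy0 : (0:ℤ) < (G.degree y : ℤ) := by exact_mod_cast hdypos
    set SxZ : ℤ := ∑ u ∈ G.neighborFinset x, (g u - g x) with hSxZ
    set SyZ : ℤ := ∑ u ∈ G.neighborFinset y, (g u - g y) with hSyZ
    have key : 4*(G.degree y : ℤ) + 8*(G.degree x : ℤ)
        - 2*(G.degree x : ℤ)*(G.degree y : ℤ)
        ≤ (G.degree y : ℤ) * SxZ - (G.degree x : ℤ) * SyZ := by
      nlinarith [mul_le_mul_of_nonneg_left hSx hdy0.le,
        mul_le_mul_of_nonneg_left hSy hdx0.le,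
        mul_nonneg (add_nonneg hFw0 hFz0) (sub_nonneg.mpr hdxy)]
    have hcastSx : ∑ u ∈ G.neighborFinset x, ((g u : ℝ) - (g x : ℝ)) = ((SxZ : ℤ) : ℝ) := by
      rw [hSxZ]
      push_cast
      rfl
    have hcastSy : ∑ u ∈ G.neighborFinset y, ((g u : ℝ) - (g y : ℝ)) = ((SyZ : ℤ) : ℝ) := by
      rw [hSyZ]
      push_cast
      rfl
    have hXY : (4*(G.degree y : ℝ) + 8*(G.degree x : ℝ)
        - 2*(G.degree x : ℝ)*(G.degree y : ℝ))
        ≤ (G.degree y : ℝ) * ((SxZ : ℤ) : ℝ) - (G.degree x : ℝ) * ((SyZ : ℤ) : ℝ) := by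
      exact_mod_cast key
    simp only [graphLap]
    rw [hcastSx, hcastSy]
    rw [div_sub_div _ _ hD1.ne' hD2.ne']
    rw [show 4 / (G.degree x : ℝ) + 8 / (G.degree y : ℝ) - 2
        = (4*(G.degree y : ℝ) + 8*(G.degree x : ℝ)
          - 2*(G.degree x : ℝ)*(G.degree y : ℝ)) / ((G.degree x : ℝ) * (G.degree y : ℝ)) by
      field_simp]
    exact (div_le_div_iff_of_pos_right (by positivity)).mpr (by linarith [hXY])
  -- ## conclusion
  have hmem : 4 / (G.degree x : ℝ) + 8 / (G.degree y : ℝ) - 2 ∈ {r : ℝ | ∃ f0 : V → ℤ,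
      (∀ u v : V, |f0 u - f0 v| ≤ (G.dist u v : ℤ)) ∧ f0 y - f0 x = 1 ∧
      r = graphLap G f0 x - graphLap G f0 y} :=
    ⟨f, hLip, by rw [hfy, hfx]; norm_num, hval.symm⟩
  simp only [llyCurv]
  exact le_antisymm (csInf_le ⟨_, hlow⟩ hmem) (le_csInf ⟨_, hmem⟩ hlow)
end
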